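/- arXiv:1306.2165 — 8 statements merged into one kernel-verified Lean document; each statement's English description precedes it below -/
import Mathlib

section
/- Let σ₁ ∈ ℝ, let d ≥ 1 be an integer, let (ρ_j)_{j≥1} be complex numbers with Re ρ_j ≤ σ₁ and ρ_j ≠ σ₁, and let (n_j)_{j≥1} be integers such that ∑_j |n_j| · |ρ_j − σ₁|^{−d} < ∞. Then for every σ₂ > σ₁ there is a constant C₀ > 0 such that for all s with Re s ≥ σ₂ the series G(s) = ∑_j n_j · (s − σ₁)^{d−1} / ((ρ_j − σ₁)^{d−1} (ρ_j − s)) converges absolutely and satisfies |G(s)| ≤ C₀ |s − σ₁|^d. -/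
set_option maxHeartbeats 1000000


open Complex

/-- Sharp polynomial growth estimate for the logarithmic derivative of the
Hadamard part of a meromorphic function with left located divisor:
on every half-plane Re s ≥ σ₂ > σ₁, the series
G(s) = ∑_j n_j (s−σ₁)^{d−1} / ((ρ_j−σ₁)^{d−1} (ρ_j − s))
converges absolutely and |G(s)| ≤ C₀ |s − σ₁|^d. -/
theorem stmt1 (σ₁ : ℝ) (d : ℕ) (hd : 1 ≤ d) (ρ : ℕ → ℂ) (n : ℕ → ℤ)
    (hρre : ∀ j, (ρ j).re ≤ σ₁) (hρne : ∀ j, ρ j ≠ (σ₁ : ℂ))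
    (hsum : Summable fun j => (|n j| : ℝ) / ‖ρ j - σ₁‖ ^ d) :
    ∀ σ₂ : ℝ, σ₁ < σ₂ → ∃ C₀ > (0 : ℝ), ∀ s : ℂ, σ₂ ≤ s.re →
      Summable (fun j => ‖
        ((n j : ℂ) * (s - σ₁) ^ (d - 1) / ((ρ j - σ₁) ^ (d - 1) * (ρ j - s)))‖) ∧
      ‖(∑' j, (n j : ℂ) * (s - σ₁) ^ (d - 1) /
          ((ρ j - σ₁) ^ (d - 1) * (ρ j - s)))‖ ≤
        C₀ * ‖s - σ₁‖ ^ d := by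
  obtain ⟨e, rfl⟩ : ∃ e, d = e + 1 := ⟨d - 1, (Nat.succ_pred_eq_of_pos hd).symm⟩
  intro σ₂ hσ₂
  set δ := σ₂ - σ₁ with hδdef
  have hδ : 0 < δ := by simp only [hδdef]; linarith
  set S := ∑' j, (|n j| : ℝ) / ‖ρ j - σ₁‖ ^ (e + 1) with hS
  have hS0 : 0 ≤ S := tsum_nonneg (fun j => by positivity)
  refine ⟨2 / δ * S + 1, by positivity, fun s hs => ?_⟩
  set A := ‖s - σ₁‖ with hA
  have hAδ : δ ≤ A := by
    have h1 : δ ≤ (s - σ₁).re := by simp only [Complex.sub_re, Complex.ofReal_re]; linarith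
    calc δ ≤ (s - σ₁).re := h1
      _ ≤ |(s - σ₁).re| := le_abs_self _
      _ ≤ A := Complex.abs_re_le_norm _
  have hkey : ∀ j, ‖(n j : ℂ) * (s - σ₁) ^ (e + 1 - 1) /
      ((ρ j - σ₁) ^ (e + 1 - 1) * (ρ j - s))‖
      ≤ (2 / δ * A ^ (e + 1)) * ((|n j| : ℝ) / ‖ρ j - σ₁‖ ^ (e + 1)) := by
    intro j
    set B := ‖ρ j - σ₁‖ with hB
    set R := ‖ρ j - s‖ with hR
    have hB0 : 0 < B := by
      simpa [hB] using (norm_pos_iff.mpr (sub_ne_zero.mpr (hρne j)))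
    have hRδ : δ ≤ R := by
      have h1 : (ρ j - s).re ≤ -δ := by
        simp only [Complex.sub_re]
        have := hρre j; linarith
      calc δ ≤ -(ρ j - s).re := by linarith
        _ ≤ |(ρ j - s).re| := neg_le_abs _
        _ ≤ R := Complex.abs_re_le_norm _
    have htri : B ≤ R + A := by
      have heq : ρ j - (σ₁ : ℂ) = (ρ j - s) + (s - σ₁) := by ring
      calc B = ‖(ρ j - s) + (s - σ₁)‖ := by rw [hB, heq]
        _ ≤ R + A := norm_add_le _ _
    have hBle : B ≤ 2 / δ * (A * R) := by
      rw [div_mul_eq_mul_div, le_div_iff₀ hδ]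
      nlinarith [mul_le_mul_of_nonneg_right hAδ (le_trans hδ.le hRδ),
        mul_le_mul_of_nonneg_right hRδ (le_trans hδ.le hAδ),
        mul_le_mul_of_nonneg_left htri hδ.le]
    have habs : ‖(n j : ℂ) * (s - σ₁) ^ (e + 1 - 1) /
        ((ρ j - σ₁) ^ (e + 1 - 1) * (ρ j - s))‖
        = (|n j| : ℝ) * A ^ e / (B ^ e * R) := by
      simp only [Nat.add_sub_cancel]
      rw [norm_div, norm_mul, norm_mul, norm_pow, norm_pow, Complex.norm_intCast]
    have hmain : A ^ e / (B ^ e * R) ≤ 2 / δ * A ^ (e + 1) / B ^ (e + 1) := by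
      have hR0 : (0 : ℝ) < R := lt_of_lt_of_le hδ hRδ
      rw [div_le_div_iff₀ (mul_pos (pow_pos hB0 e) hR0) (pow_pos hB0 (e + 1))]
      have hstep := mul_le_mul_of_nonneg_left hBle
        (show (0 : ℝ) ≤ A ^ e * B ^ e by positivity)
      calc A ^ e * B ^ (e + 1) = (A ^ e * B ^ e) * B := by ring
        _ ≤ (A ^ e * B ^ e) * (2 / δ * (A * R)) := hstep
        _ = 2 / δ * A ^ (e + 1) * (B ^ e * R) := by ring
    rw [habs]
    calc (|n j| : ℝ) * A ^ e / (B ^ e * R)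
        = (|n j| : ℝ) * (A ^ e / (B ^ e * R)) := by ring
      _ ≤ (|n j| : ℝ) * (2 / δ * A ^ (e + 1) / B ^ (e + 1)) := by
          apply mul_le_mul_of_nonneg_left hmain (by positivity)
      _ = (2 / δ * A ^ (e + 1)) * ((|n j| : ℝ) / B ^ (e + 1)) := by ring
  have hsummable : Summable (fun j => ‖(n j : ℂ) * (s - σ₁) ^ (e + 1 - 1) /
      ((ρ j - σ₁) ^ (e + 1 - 1) * (ρ j - s))‖) :=
    Summable.of_nonneg_of_le (fun j => norm_nonneg _) hkey
      (hsum.mul_left (2 / δ * A ^ (e + 1)))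
  refine ⟨hsummable, ?_⟩
  have h1 : ‖(∑' j, (n j : ℂ) * (s - σ₁) ^ (e + 1 - 1) /
      ((ρ j - σ₁) ^ (e + 1 - 1) * (ρ j - s)))‖
      ≤ ∑' j, ‖(n j : ℂ) * (s - σ₁) ^ (e + 1 - 1) /
      ((ρ j - σ₁) ^ (e + 1 - 1) * (ρ j - s))‖ := by
    have hsummable' := hsummable
    exact norm_tsum_le_tsum_norm hsummable'
  have h2 : (∑' j, ‖(n j : ℂ) * (s - σ₁) ^ (e + 1 - 1) /
      ((ρ j - σ₁) ^ (e + 1 - 1) * (ρ j - s))‖)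
      ≤ ∑' j, (2 / δ * A ^ (e + 1)) * ((|n j| : ℝ) / ‖ρ j - σ₁‖ ^ (e + 1)) :=
    Summable.tsum_le_tsum hkey hsummable (hsum.mul_left _)
  have h3 : (∑' j, (2 / δ * A ^ (e + 1)) * ((|n j| : ℝ) / ‖ρ j - σ₁‖ ^ (e + 1)))
      = (2 / δ * A ^ (e + 1)) * S := tsum_mul_left
  have hApow : (0 : ℝ) ≤ A ^ (e + 1) := by positivity
  have hfin : (2 / δ * A ^ (e + 1)) * S ≤ (2 / δ * S + 1) * A ^ (e + 1) := by nlinarith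
  calc ‖(∑' j, (n j : ℂ) * (s - σ₁) ^ (e + 1 - 1) /
        ((ρ j - σ₁) ^ (e + 1 - 1) * (ρ j - s)))‖
      ≤ ∑' j, ‖(n j : ℂ) * (s - σ₁) ^ (e + 1 - 1) /
        ((ρ j - σ₁) ^ (e + 1 - 1) * (ρ j - s))‖ := h1
    _ ≤ (2 / δ * A ^ (e + 1)) * S := by rw [← h3]; exact h2
    _ ≤ (2 / δ * S + 1) * A ^ (e + 1) := hfin
end

section
/- Let σ₁ ∈ ℝ and let c ≥ σ₁ + 4. There exists a constant C > 0, depending only on a = c − σ₁, such that for every complex number ρ with Re ρ ≤ σ₁ one has ∫_ℝ |ρ − σ₁| / (|c + it − σ₁|² · |ρ − (c + it)|) dt ≤ C. -/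
open Complex MeasureTheory

/-- Uniform bound on the vertical-line integral used to prove that the vertical
order of the Hadamard part is at most d+1: for c = σ₁ + a with a ≥ 4 there is
a constant C > 0, depending only on a, such that for every ρ with Re ρ ≤ σ₁,
∫_ℝ |ρ−σ₁| / (|c+it−σ₁|² |ρ−(c+it)|) dt ≤ C. -/
theorem stmt2 (a : ℝ) (ha : 4 ≤ a) :
    ∃ C > (0 : ℝ), ∀ σ₁ c : ℝ, c = σ₁ + a → ∀ ρ : ℂ, ρ.re ≤ σ₁ →
      Integrable (fun t : ℝ =>
        ‖ρ - σ₁‖ /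
          (‖(c : ℂ) + t * I - σ₁‖ ^ 2 *
            ‖ρ - ((c : ℂ) + t * I)‖)) ∧
      (∫ t : ℝ, ‖ρ - σ₁‖ /
          (‖(c : ℂ) + t * I - σ₁‖ ^ 2 *
            ‖ρ - ((c : ℂ) + t * I)‖)) ≤ C := by
  refine ⟨2 * Real.pi, by positivity, ?_⟩
  intro σ₁ c hc ρ hρ
  set τ : ℝ := ρ.im with hτ
  set f : ℝ → ℝ := fun t =>
    ‖ρ - σ₁‖ /
      (‖(c : ℂ) + t * I - σ₁‖ ^ 2 *
        ‖ρ - ((c : ℂ) + t * I)‖) with hf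
  set g : ℝ → ℝ := fun t =>
    3 / 2 * (1 / (1 + t ^ 2)) + 1 / 2 * (1 / (1 + (t - τ) ^ 2)) with hg
  have ha1 : (1 : ℝ) ≤ a := by linarith
  -- basic facts about X and Y
  have hX2 : ∀ t : ℝ, ‖(c : ℂ) + t * I - σ₁‖ ^ 2 = a ^ 2 + t ^ 2 := by
    intro t
    rw [Complex.sq_norm, Complex.normSq_apply]
    simp [hc]
    ring
  have hXge : ∀ t : ℝ, 1 + t ^ 2 ≤ ‖(c : ℂ) + t * I - σ₁‖ ^ 2 := by
    intro t
    rw [hX2]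
    nlinarith
  have hY2 : ∀ t : ℝ, 1 + (t - τ) ^ 2 ≤ ‖ρ - ((c : ℂ) + t * I)‖ ^ 2 := by
    intro t
    rw [Complex.sq_norm, Complex.normSq_apply]
    simp only [Complex.sub_re, Complex.add_re, Complex.ofReal_re, Complex.mul_re,
      Complex.I_re, Complex.ofReal_im, Complex.I_im, Complex.sub_im, Complex.add_im,
      Complex.mul_im]
    have h1 : a ≤ c - ρ.re := by rw [hc]; linarith
    nlinarith [sq_nonneg (ρ.re - c + a)]
  have hXpos : ∀ t : ℝ, 0 < ‖(c : ℂ) + t * I - σ₁‖ := by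
    intro t
    have := hXge t
    nlinarith [norm_nonneg ((c : ℂ) + t * I - σ₁), sq_nonneg t]
  have hYpos : ∀ t : ℝ, 0 < ‖ρ - ((c : ℂ) + t * I)‖ := by
    intro t
    have := hY2 t
    nlinarith [norm_nonneg (ρ - ((c : ℂ) + t * I)), sq_nonneg (t - τ)]
  -- pointwise bound f ≤ g
  have hfg : ∀ t : ℝ, f t ≤ g t := by
    intro t
    set X := ‖(c : ℂ) + t * I - σ₁‖ with hXdef
    set Y := ‖ρ - ((c : ℂ) + t * I)‖ with hYdef
    have hXp : 0 < X := hXpos t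
    have hYp : 0 < Y := hYpos t
    have hXg : 1 + t ^ 2 ≤ X ^ 2 := hXge t
    have hYg : 1 + (t - τ) ^ 2 ≤ Y ^ 2 := hY2 t
    have hr : ‖ρ - σ₁‖ ≤ Y + X := by
      have := norm_sub_le_norm_sub_add_norm_sub ρ ((c : ℂ) + t * I) (σ₁ : ℂ)
      simpa using this
    have hP : (0 : ℝ) < 1 + t ^ 2 := by positivity
    have hQ : (0 : ℝ) < 1 + (t - τ) ^ 2 := by positivity
    calc f t ≤ (Y + X) / (X ^ 2 * Y) := by
          have hd : 0 < X ^ 2 * Y := by positivity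
          exact div_le_div_of_nonneg_right hr hd.le
        _ ≤ 3 / (2 * X ^ 2) + 1 / (2 * Y ^ 2) := by
          rw [div_add_div _ _ (by positivity) (by positivity),
            div_le_div_iff₀ (by positivity) (by positivity)]
          nlinarith [mul_nonneg (mul_nonneg (sq_nonneg (X - Y)) (sq_nonneg X)) hYp.le]
        _ ≤ 3 / (2 * (1 + t ^ 2)) + 1 / (2 * (1 + (t - τ) ^ 2)) := by
          gcongr
        _ = g t := by
          rw [hg]
          have h1 : (2 : ℝ) * (1 + t ^ 2) ≠ 0 := by positivity
          have h2 : (2 : ℝ) * (1 + (t - τ) ^ 2) ≠ 0 := by positivity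
          field_simp
  have hf0 : ∀ t : ℝ, 0 ≤ f t := by
    intro t
    apply div_nonneg (norm_nonneg _)
    positivity
  -- integrability of g
  have hint1 : Integrable (fun t : ℝ => 1 / (1 + t ^ 2)) := by
    simpa [one_div] using integrable_inv_one_add_sq
  have hint2 : Integrable (fun t : ℝ => 1 / (1 + (t - τ) ^ 2)) :=
    hint1.comp_sub_right τ
  have hgint : Integrable g := by
    exact (hint1.const_mul _).add (hint2.const_mul _)
  -- continuity of f
  have hcont : Continuous f := by
    rw [hf]
    apply Continuous.div continuous_const
    · exact ((continuous_norm.comp (by fun_prop)).pow 2).mul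
        (continuous_norm.comp (by fun_prop))
    · intro t
      have := hXpos t
      have := hYpos t
      positivity
  have hfint : Integrable f := by
    apply hgint.mono' hcont.aestronglyMeasurable
    filter_upwards with t
    rw [Real.norm_eq_abs, _root_.abs_of_nonneg (hf0 t)]
    exact hfg t
  refine ⟨hfint, ?_⟩
  have hle : (∫ t : ℝ, f t) ≤ ∫ t : ℝ, g t :=
    integral_mono hfint hgint hfg
  have hgval : (∫ t : ℝ, g t) = 2 * Real.pi := by
    rw [hg]
    rw [integral_add (hint1.const_mul _) (hint2.const_mul _),
      integral_const_mul, integral_const_mul]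
    have h1 : (∫ t : ℝ, 1 / (1 + t ^ 2)) = Real.pi := by
      simp [one_div, integral_univ_inv_one_add_sq]
    have h2 : (∫ t : ℝ, 1 / (1 + (t - τ) ^ 2)) = Real.pi := by
      rw [integral_sub_right_eq_self (fun s : ℝ => 1 / (1 + s ^ 2)) τ]
      exact h1
    rw [h1, h2]; ring
  calc (∫ t : ℝ, f t) ≤ ∫ t : ℝ, g t := hle
    _ = 2 * Real.pi := hgval
end

section
/- Let σ₁ ∈ ℝ, let d ≥ 1 be an integer, let (ρ_j)_{j≥1} be complex numbers with Re ρ_j ≤ σ₁ and ρ_j ≠ σ₁, and let (n_j)_{j≥1} be integers such that ∑_j |n_j| · |ρ_j − σ₁|^{−d} < ∞. Set G(s) = ∑_j n_j · (s − σ₁)^{d−1} / ((ρ_j − σ₁)^{d−1} (ρ_j − s)). Then for every c > σ₁ the function t ↦ |G(c + it)| / (1 + |t|)^{d+1} is integrable on ℝ. -/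
open Complex MeasureTheory

private lemma aux_prod_inv {x y : ℝ} (hx : 0 ≤ x) (hy : 0 ≤ y) :
    ((1+x)*(1+y))⁻¹ ≤ (1+x^2)⁻¹ + (1+y^2)⁻¹ := by
  have h1 : (0:ℝ) < 1 + x^2 := by positivity
  have h3 : (0:ℝ) < (1+x)*(1+y) := by positivity
  rw [← one_div, ← one_div, ← one_div, div_add_div _ _ h1.ne' (by positivity : ((1:ℝ)+y^2) ≠ 0),
    div_le_div_iff₀ h3 (by positivity)]
  nlinarith [mul_nonneg (mul_nonneg hx hy) (sq_nonneg (x-y)), mul_nonneg hx hy,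
    mul_nonneg (mul_nonneg hx hy) (mul_nonneg hx hy)]

private lemma aux_key {δ' K B R a γ t nn : ℝ} {d : ℕ} (hd : 1 ≤ d)
    (hδ'0 : 0 < δ') (hδ'1 : δ' ≤ 1) (hδ'a : δ' ≤ a) (hK0 : 0 ≤ K)
    (hB : 0 < B) (hR : 0 < R) (hnn : 0 ≤ nn)
    (hRa : a ≤ R) (hRγ : |γ - t| ≤ R) (hBaγ : B ≤ a + |γ|) :
    nn * K^(d-1) / (B^(d-1) * R * (1+|t|)^2) ≤
      (8 * K^(d-1) / δ' * (nn / B^d)) * ((1 + t^2)⁻¹ + (1 + (t - γ)^2)⁻¹) := by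
  have hBd : B^d = B^(d-1) * B := by
    rw [← pow_succ]; congr 1; omega
  have hsq : 1 + t^2 ≤ (1+|t|)^2 := by nlinarith [abs_nonneg t, _root_.sq_abs t]
  have hPnn : (0:ℝ) ≤ B^(d-1) := pow_nonneg hB.le _
  have hS2 : (0:ℝ) < 1 + (t-γ)^2 := by positivity
  have ha0 : 0 < a := lt_of_lt_of_le hδ'0 hδ'a
  have hmain : (B^(d-1)*R*(1+|t|)^2)⁻¹ ≤ 8/(δ'*B^d) * ((1+t^2)⁻¹ + (1+(t-γ)^2)⁻¹) := by
    rcases le_or_gt (1 + |γ|) a with hcase | hcase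
    · -- Case A: R ≥ δ'B/8
      have hRδ : δ'*B/8 ≤ R := by
        have h1 := mul_le_mul_of_nonneg_right hδ'1 hB.le
        have h2 : B ≤ 2*a := by linarith [abs_nonneg γ]
        linarith
      have hprod : B^(d-1)*(δ'*B/8)*(1+t^2) ≤ B^(d-1)*R*(1+|t|)^2 :=
        mul_le_mul (mul_le_mul_of_nonneg_left hRδ hPnn) hsq (by positivity)
          (mul_nonneg hPnn hR.le)
      calc (B^(d-1)*R*(1+|t|)^2)⁻¹ ≤ (B^(d-1)*(δ'*B/8)*(1+t^2))⁻¹ := by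
            apply inv_anti₀ _ hprod
            have : 0 < B^(d-1) := pow_pos hB _
            have : 0 < δ'*B/8 := by positivity
            positivity
        _ = 8/(δ'*B^d) * (1+t^2)⁻¹ := by
            have h2 : B^(d-1) ≠ 0 := pow_ne_zero _ hB.ne'
            rw [hBd]; field_simp
            try ring
            try tauto
        _ ≤ 8/(δ'*B^d) * ((1+t^2)⁻¹ + (1+(t-γ)^2)⁻¹) := by
            apply mul_le_mul_of_nonneg_left (le_add_of_nonneg_right (by positivity))
            have : 0 < B^d := pow_pos hB _
            positivity
    · rcases le_or_gt |γ| (2*|γ - t|) with hcase2 | hcase2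
      · -- Case B-i: R ≥ δ'B/8 again
        have hB2 : B ≤ 2*(1+|γ|) := by linarith
        have hRδ : δ'*B/8 ≤ R := by
          have h1 : B/4 ≤ 1 + |γ - t| := by linarith
          have h2 : δ'*(B/4) ≤ δ'*(1+|γ-t|) := mul_le_mul_of_nonneg_left h1 hδ'0.le
          have h3 : δ'*|γ-t| ≤ 1*|γ-t| := mul_le_mul_of_nonneg_right hδ'1 (abs_nonneg _)
          -- 2R ≥ δ' + |γ-t| ≥ δ'(1+|γ-t|)
          have h4 : δ' + |γ-t| ≤ 2*R := by linarith
          linarith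
        have hprod : B^(d-1)*(δ'*B/8)*(1+t^2) ≤ B^(d-1)*R*(1+|t|)^2 :=
          mul_le_mul (mul_le_mul_of_nonneg_left hRδ hPnn) hsq (by positivity)
            (mul_nonneg hPnn hR.le)
        calc (B^(d-1)*R*(1+|t|)^2)⁻¹ ≤ (B^(d-1)*(δ'*B/8)*(1+t^2))⁻¹ := by
              apply inv_anti₀ _ hprod
              have h5 : 0 < B^(d-1) := pow_pos hB _
              have h6 : 0 < δ'*B/8 := by positivity
              positivity
          _ = 8/(δ'*B^d) * (1+t^2)⁻¹ := by
              have h2 : B^(d-1) ≠ 0 := pow_ne_zero _ hB.ne'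
              rw [hBd]; field_simp
              try ring
              try tauto
          _ ≤ 8/(δ'*B^d) * ((1+t^2)⁻¹ + (1+(t-γ)^2)⁻¹) := by
              apply mul_le_mul_of_nonneg_left (le_add_of_nonneg_right (by positivity))
              have : 0 < B^d := pow_pos hB _
              positivity
      · -- Case B-ii
        have hB2 : B ≤ 2*(1+|γ|) := by linarith
        have htγ : |γ|/2 ≤ |t| := by
          have h1 : |γ| ≤ |γ - t| + |t| := by
            calc |γ| = |(γ - t) + t| := by ring_nf
            _ ≤ |γ - t| + |t| := abs_add_le _ _
          linarith
        have hRδ : δ'*(1+|γ-t|)/2 ≤ R := by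
          have h3 : δ'*|γ-t| ≤ 1*|γ-t| := mul_le_mul_of_nonneg_right hδ'1 (abs_nonneg _)
          have h4 : δ' + |γ-t| ≤ 2*R := by linarith
          linarith
        have hsq2 : (1+|t|)*((1+|γ|)/2) ≤ (1+|t|)^2 := by
          nlinarith [abs_nonneg t, abs_nonneg γ]
        have hprod : B^(d-1)*(δ'*(1+|γ-t|)/2)*((1+|t|)*((1+|γ|)/2)) ≤ B^(d-1)*R*(1+|t|)^2 := by
          apply mul_le_mul (mul_le_mul_of_nonneg_left hRδ hPnn) hsq2 _ (mul_nonneg hPnn hR.le)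
          positivity
        have hprod2 : δ'*B^d*((1+|t|)*(1+|γ-t|))/8 ≤ B^(d-1)*(δ'*(1+|γ-t|)/2)*((1+|t|)*((1+|γ|)/2)) := by
          rw [hBd]
          nlinarith [mul_nonneg (mul_nonneg (mul_nonneg (mul_nonneg hPnn hδ'0.le)
            (by positivity : (0:ℝ) ≤ 1 + |γ-t|)) (by positivity : (0:ℝ) ≤ 1 + |t|))
            (by linarith : (0:ℝ) ≤ 2*(1+|γ|) - B)]
        have hden : δ'*B^d*((1+|t|)*(1+|γ-t|))/8 ≤ B^(d-1)*R*(1+|t|)^2 := hprod2.trans hprod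
        calc (B^(d-1)*R*(1+|t|)^2)⁻¹ ≤ (δ'*B^d*((1+|t|)*(1+|γ-t|))/8)⁻¹ := by
              apply inv_anti₀ _ hden
              have h5 : 0 < B^d := pow_pos hB _
              positivity
          _ = 8/(δ'*B^d) * ((1+|t|)*(1+|γ-t|))⁻¹ := by
              have h2 : B^(d-1) ≠ 0 := pow_ne_zero _ hB.ne'
              have h4 : (1+|t|) ≠ 0 := by positivity
              have h5 : (1+|γ-t|) ≠ 0 := by positivity
              rw [hBd]; field_simp
              try ring
              try tauto
          _ ≤ 8/(δ'*B^d) * ((1+t^2)⁻¹ + (1+(t-γ)^2)⁻¹) := by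
              have h6 := aux_prod_inv (abs_nonneg t) (abs_nonneg (γ - t))
              rw [_root_.sq_abs, _root_.sq_abs] at h6
              have h7 : (γ - t)^2 = (t - γ)^2 := by ring
              rw [h7] at h6
              apply mul_le_mul_of_nonneg_left h6
              have : 0 < B^d := pow_pos hB _
              positivity
  calc nn * K^(d-1) / (B^(d-1)*R*(1+|t|)^2)
      = nn * K^(d-1) * (B^(d-1)*R*(1+|t|)^2)⁻¹ := div_eq_mul_inv _ _
    _ ≤ nn * K^(d-1) * (8/(δ'*B^d) * ((1+t^2)⁻¹ + (1+(t-γ)^2)⁻¹)) :=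
        mul_le_mul_of_nonneg_left hmain (by positivity)
    _ = (8 * K^(d-1) / δ' * (nn / B^d)) * ((1+t^2)⁻¹ + (1+(t-γ)^2)⁻¹) := by
        ring

set_option maxHeartbeats 1000000 in
/-- The vertical order of the Hadamard part is at most d+1: for every c > σ₁,
the function t ↦ |G(c+it)| / (1+|t|)^{d+1} is integrable on ℝ, where
G(s) = ∑_j n_j (s−σ₁)^{d−1} / ((ρ_j−σ₁)^{d−1} (ρ_j − s)). -/
theorem stmt3 (σ₁ : ℝ) (d : ℕ) (hd : 1 ≤ d) (ρ : ℕ → ℂ) (n : ℕ → ℤ)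
    (hρre : ∀ j, (ρ j).re ≤ σ₁) (hρne : ∀ j, ρ j ≠ (σ₁ : ℂ))
    (hsum : Summable fun j => (|n j| : ℝ) / ‖ρ j - σ₁‖ ^ d) :
    ∀ c : ℝ, σ₁ < c →
      Integrable (fun t : ℝ =>
        ‖∑' j, (n j : ℂ) * (((c : ℂ) + t * I) - σ₁) ^ (d - 1) /
            ((ρ j - σ₁) ^ (d - 1) * (ρ j - ((c : ℂ) + t * I)))‖ /
          (1 + |t|) ^ (d + 1)) := by
  intro c hc
  have hδ : (0:ℝ) < c - σ₁ := sub_pos.2 hc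
  set δ' : ℝ := min (c - σ₁) 1 with hδ'def
  have hδ'0 : 0 < δ' := lt_min hδ one_pos
  have hδ'1 : δ' ≤ 1 := min_le_right _ _
  have hδ'δ : δ' ≤ c - σ₁ := min_le_left _ _
  set K : ℝ := max (c - σ₁) 1 with hKdef
  have hK1 : (1:ℝ) ≤ K := le_max_right _ _
  -- abbreviations
  set G : ℕ → ℝ → ℂ := fun j t => (n j : ℂ) * (((c : ℂ) + t * I) - σ₁) ^ (d - 1) /
      ((ρ j - σ₁) ^ (d - 1) * (ρ j - ((c : ℂ) + t * I))) with hGdef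
  set F : ℕ → ℝ → ℂ := fun j t => G j t * ((((1 + |t|) ^ (d + 1) : ℝ)) : ℂ)⁻¹ with hFdef
  set coeff : ℕ → ℝ := fun j => 8 * K ^ (d-1) / δ' * ((|n j| : ℝ) / ‖ρ j - σ₁‖ ^ d)
    with hcoeffdef
  set m : ℕ → ℝ → ℝ := fun j t => coeff j * ((1 + t^2)⁻¹ + (1 + (t - (ρ j).im)^2)⁻¹) with hmdef
  have hB : ∀ j, 0 < ‖ρ j - σ₁‖ := fun j => by
    exact norm_pos_iff.2 (sub_ne_zero.2 (hρne j))
  have ha : ∀ j, c - σ₁ ≤ c - (ρ j).re := fun j => by linarith [hρre j]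
  have hcoeff0 : ∀ j, 0 ≤ coeff j := fun j =>
    mul_nonneg (div_nonneg (by positivity) hδ'0.le)
      (div_nonneg (by positivity) (by positivity))
  -- pointwise geometric facts
  have fact1 : ∀ t : ℝ, ‖((c:ℂ) + t*I) - σ₁‖ ≤ K * (1 + |t|) := by
    intro t
    refine (Complex.norm_le_abs_re_add_abs_im _).trans ?_
    have h1 : (((c:ℂ) + t*I) - σ₁).re = c - σ₁ := by simp
    have h2 : (((c:ℂ) + t*I) - σ₁).im = t := by simp
    rw [h1, h2, abs_of_pos hδ]
    have := le_max_left (c - σ₁) 1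
    nlinarith [abs_nonneg t, hK1]
  have fact2 : ∀ (j : ℕ) (t : ℝ), c - (ρ j).re ≤ ‖ρ j - ((c:ℂ) + t*I)‖ := by
    intro j t
    have h := Complex.abs_re_le_norm (ρ j - ((c:ℂ) + t*I))
    have h2 : (ρ j - ((c:ℂ) + t*I)).re = (ρ j).re - c := by simp
    rw [h2] at h
    calc c - (ρ j).re = -((ρ j).re - c) := by ring
    _ ≤ |(ρ j).re - c| := neg_le_abs _
    _ ≤ _ := h
  have fact3 : ∀ (j : ℕ) (t : ℝ), |(ρ j).im - t| ≤ ‖ρ j - ((c:ℂ) + t*I)‖ := by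
    intro j t
    have h := Complex.abs_im_le_norm (ρ j - ((c:ℂ) + t*I))
    have h2 : (ρ j - ((c:ℂ) + t*I)).im = (ρ j).im - t := by simp
    rwa [h2] at h
  have fact4 : ∀ j, ‖ρ j - σ₁‖ ≤ (c - (ρ j).re) + |(ρ j).im| := by
    intro j
    refine (Complex.norm_le_abs_re_add_abs_im _).trans ?_
    have h1 : (ρ j - (σ₁:ℂ)).re = (ρ j).re - σ₁ := by simp
    have h2 : (ρ j - (σ₁:ℂ)).im = (ρ j).im := by simp
    rw [h1, h2, abs_of_nonpos (by linarith [hρre j])]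
    have := hρre j
    linarith
  have hR0 : ∀ (j : ℕ) (t : ℝ), 0 < ‖ρ j - ((c:ℂ) + t*I)‖ := fun j t =>
    lt_of_lt_of_le (by linarith [ha j]) (fact2 j t)
  -- norm of F
  have hnormF : ∀ (j : ℕ) (t : ℝ), ‖F j t‖ = (|n j| : ℝ) *
      ‖((c:ℂ) + t*I) - σ₁‖ ^ (d-1) /
      (‖ρ j - σ₁‖ ^ (d-1) * ‖ρ j - ((c:ℂ) + t*I)‖ * (1+|t|)^(d+1)) := by
    intro j t
    have hw : (0:ℝ) < (1+|t|)^(d+1) := by positivity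
    show ‖G j t * _‖ = _
    rw [norm_mul, norm_inv, Complex.norm_real, Real.norm_eq_abs, abs_of_pos hw]
    show ‖G j t‖ * _ = _
    rw [hGdef]
    rw [norm_div, norm_mul, norm_mul, norm_pow, norm_pow, Complex.norm_intCast,
      ← Int.cast_abs, ← div_eq_mul_inv, div_div]

  have hF5 : ∀ (j : ℕ) (t : ℝ), ‖F j t‖ ≤ (|n j| : ℝ) * K ^ (d-1) /
      (‖ρ j - σ₁‖ ^ (d-1) * ‖ρ j - ((c:ℂ) + t*I)‖ * (1+|t|)^2) := by
    intro j t
    rw [hnormF j t]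
    have hRpos := hR0 j t
    have hBpos := hB j
    have hD : (0:ℝ) < ‖ρ j - σ₁‖ ^ (d-1) * ‖ρ j - ((c:ℂ)+t*I)‖
        * (1+|t|)^(d+1) := by positivity
    have hA : ‖((c:ℂ) + t*I) - σ₁‖ ^ (d-1) ≤ K^(d-1) * (1+|t|)^(d-1) := by
      calc ‖((c:ℂ) + t*I) - σ₁‖ ^ (d-1) ≤ (K * (1+|t|))^(d-1) :=
            pow_le_pow_left₀ (norm_nonneg _) (fact1 t) _
        _ = K^(d-1) * (1+|t|)^(d-1) := mul_pow _ _ _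
    have hpow : (1+|t|)^(d+1) = (1+|t|)^(d-1) * (1+|t|)^2 := by
      rw [← pow_add]; congr 1; omega
    calc (|n j| : ℝ) * ‖((c:ℂ) + t*I) - σ₁‖ ^ (d-1) /
          (‖ρ j - σ₁‖ ^ (d-1) * ‖ρ j - ((c:ℂ)+t*I)‖ * (1+|t|)^(d+1))
        ≤ (|n j| : ℝ) * (K^(d-1) * (1+|t|)^(d-1)) /
          (‖ρ j - σ₁‖ ^ (d-1) * ‖ρ j - ((c:ℂ)+t*I)‖ * (1+|t|)^(d+1)) := by
          exact (div_le_div_iff_of_pos_right hD).mpr (mul_le_mul_of_nonneg_left hA (by positivity))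
      _ = (|n j| : ℝ) * K^(d-1) /
          (‖ρ j - σ₁‖ ^ (d-1) * ‖ρ j - ((c:ℂ)+t*I)‖ * (1+|t|)^2) := by
          have h1 : ‖ρ j - σ₁‖ ^ (d-1) ≠ 0 := by positivity
          have h2 : ‖ρ j - ((c:ℂ)+t*I)‖ ≠ 0 := hRpos.ne'
          have h3 : (1+|t|) ≠ 0 := by positivity
          rw [hpow]
          field_simp
  have hkey : ∀ (j : ℕ) (t : ℝ), ‖F j t‖ ≤ m j t := by
    intro j t
    refine (hF5 j t).trans ?_
    exact aux_key hd hδ'0 hδ'1 ((hδ'δ).trans (ha j)) (le_trans zero_le_one hK1) (hB j)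
      (hR0 j t) (by positivity) (fact2 j t) (fact3 j t) (fact4 j)
  have hcoeff_sum : Summable coeff := hsum.mul_left (8 * K ^ (d-1) / δ')
  have hm_le : ∀ (j : ℕ) (t : ℝ), m j t ≤ 2 * coeff j := by
    intro j t
    have h1 : (1+t^2)⁻¹ ≤ 1 := inv_le_one_of_one_le₀ (by nlinarith [sq_nonneg t])
    have h2 : (1+(t - (ρ j).im)^2)⁻¹ ≤ 1 := inv_le_one_of_one_le₀ (by nlinarith [sq_nonneg (t - (ρ j).im)])
    calc m j t ≤ coeff j * 2 := mul_le_mul_of_nonneg_left (by linarith) (hcoeff0 j)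
      _ = 2 * coeff j := mul_comm _ _
  have hscont : Continuous (fun t : ℝ => (c:ℂ) + t * I) :=
    continuous_const.add (Complex.continuous_ofReal.mul continuous_const)
  have hFcont : ∀ j, Continuous (F j) := by
    intro j
    apply Continuous.mul
    · apply Continuous.div
      · exact continuous_const.mul ((hscont.sub continuous_const).pow _)
      · exact continuous_const.mul (continuous_const.sub hscont)
      · intro t
        exact mul_ne_zero (pow_ne_zero _ (sub_ne_zero.2 (hρne j)))
          (norm_ne_zero_iff.mp (hR0 j t).ne')
    · apply Continuous.inv₀
      · exact Complex.continuous_ofReal.comp ((continuous_const.add _root_.continuous_abs).pow _)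
      · intro t
        exact Complex.ofReal_ne_zero.2 (by positivity)
  have hcont : Continuous fun t => ∑' j, F j t :=
    continuous_tsum hFcont (hcoeff_sum.mul_left 2) (fun j t => (hkey j t).trans (hm_le j t))
  have hm_int : ∀ j, Integrable (m j) := fun j =>
    (integrable_inv_one_add_sq.add (integrable_inv_one_add_sq.comp_sub_right _)).const_mul _
  have hm_intval : ∀ j, (∫ t, m j t) = coeff j * (Real.pi + Real.pi) := by
    intro j
    rw [hmdef]
    rw [integral_const_mul]
    congr 1
    rw [integral_add integrable_inv_one_add_sq (integrable_inv_one_add_sq.comp_sub_right _)]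
    rw [integral_univ_inv_one_add_sq,
      integral_sub_right_eq_self (fun x => (1 + x^2)⁻¹) ((ρ j).im),
      integral_univ_inv_one_add_sq]
  have hm_nonneg : ∀ (j : ℕ) (t : ℝ), 0 ≤ m j t := fun j t =>
    mul_nonneg (hcoeff0 j) (by positivity)
  -- integrability of the tsum
  have hInt : Integrable (fun t => ∑' j, F j t) := by
    refine ⟨hcont.aestronglyMeasurable, ?_⟩
    have hnn : ∀ t, Summable fun j => ‖F j t‖ := fun t =>
      Summable.of_nonneg_of_le (fun j => norm_nonneg _)
        (fun j => (hkey j t).trans (hm_le j t)) (hcoeff_sum.mul_left 2)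
    calc ∫⁻ t, ‖∑' j, F j t‖₊ ≤ ∫⁻ t, ∑' j, (‖F j t‖₊ : ENNReal) := by
          apply lintegral_mono
          intro t
          have h1 : ‖∑' j, F j t‖₊ ≤ ∑' j, ‖F j t‖₊ :=
            nnnorm_tsum_le (by simpa [← NNReal.summable_coe] using hnn t)
          calc (‖∑' j, F j t‖₊ : ENNReal) ≤ ((∑' j, ‖F j t‖₊ : NNReal) : ENNReal) := by
                exact_mod_cast h1
            _ = ∑' j, (‖F j t‖₊ : ENNReal) :=
                ENNReal.coe_tsum (by simpa [← NNReal.summable_coe] using hnn t)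
      _ = ∑' j, ∫⁻ t, (‖F j t‖₊ : ENNReal) :=
          lintegral_tsum (fun j => ((hFcont j).measurable.nnnorm.coe_nnreal_ennreal).aemeasurable)
      _ ≤ ∑' j, ENNReal.ofReal (coeff j * (Real.pi + Real.pi)) := by
          apply ENNReal.tsum_le_tsum
          intro j
          rw [← hm_intval j, ofReal_integral_eq_lintegral_ofReal (hm_int j)
            (Filter.Eventually.of_forall (hm_nonneg j))]
          apply lintegral_mono
          intro t
          show (‖F j t‖₊ : ENNReal) ≤ ENNReal.ofReal (m j t)
          rw [← ENNReal.ofReal_coe_nnreal, coe_nnnorm]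
          exact ENNReal.ofReal_le_ofReal (hkey j t)
      _ = ENNReal.ofReal (∑' j, coeff j * (Real.pi + Real.pi)) :=
          (ENNReal.ofReal_tsum_of_nonneg (fun j => mul_nonneg (hcoeff0 j) (by positivity))
            (hcoeff_sum.mul_right _)).symm
      _ < ⊤ := ENNReal.ofReal_lt_top
  -- conclude
  have heq : (fun t : ℝ =>
      ‖∑' j, (n j : ℂ) * (((c : ℂ) + t * I) - σ₁) ^ (d - 1) /
            ((ρ j - σ₁) ^ (d - 1) * (ρ j - ((c : ℂ) + t * I)))‖ /
          (1 + |t|) ^ (d + 1)) = fun t => ‖∑' j, F j t‖ := by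
    funext t
    have hw : (0:ℝ) < (1+|t|)^(d+1) := by positivity
    have h2 : ∑' j, F j t = (∑' j, G j t) * ((((1 + |t|) ^ (d + 1) : ℝ)) : ℂ)⁻¹ :=
      tsum_mul_right
    rw [h2, norm_mul, norm_inv, Complex.norm_real, Real.norm_eq_abs, abs_of_pos hw,
      div_eq_mul_inv]
  rw [heq]
  exact hInt.norm
end

section
/- Let f(s) = 1 + ∑_{n≥1} aₙ e^{−λₙ s} be a non-constant Dirichlet series (i.e. aₙ ≠ 0 for some n). Suppose F, G : ℂ → ℂ are entire functions, G not identically zero, G(s)·f(s) = F(s) for all s with Re s > σ̄, and for some A > 0 and real α ≥ 0 one has ‖F(s)‖ ≤ exp(A(1 + ‖s‖)^α) and ‖G(s)‖ ≤ exp(A(1 + ‖s‖)^α) for all s ∈ ℂ. Then α ≥ 1; that is, the order of f satisfies o(f) ≥ 1. -/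
open Complex Filter Set

lemma aux_tend0 (c δ : ℝ) (hδ : 0 < δ) :
    Filter.Tendsto (fun x : ℝ => c * Real.exp (-δ * x)) Filter.atTop (nhds 0) := by
  have h1 : Filter.Tendsto (fun x : ℝ => -δ * x) Filter.atTop Filter.atBot :=
    (Filter.tendsto_const_mul_atBot_of_neg (by linarith : -δ < 0)).2 Filter.tendsto_id
  have h2 := (Real.tendsto_exp_atBot.comp h1).const_mul c
  simpa using h2

lemma aux_sublinear (A ε α : ℝ) (hA : 0 < A) (hε : 0 < ε) (hα : 0 ≤ α) (hα1 : α < 1) :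
    ∃ M : ℝ, 0 ≤ M ∧ ∀ t : ℝ, 0 ≤ t → A * (1 + t) ^ α ≤ ε * t + M := by
  have h0 : Filter.Tendsto (fun u : ℝ => u ^ (α - 1)) Filter.atTop (nhds 0) := by
    have := tendsto_rpow_neg_atTop (by linarith : (0:ℝ) < 1 - α)
    simpa [neg_sub] using this
  have h1 : ∀ᶠ u : ℝ in Filter.atTop, u ^ (α - 1) ≤ ε / A := by
    have := h0.eventually_le_const (show (0:ℝ) < ε / A by positivity)
    simpa using this
  obtain ⟨T, hT⟩ := Filter.eventually_atTop.1 h1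
  refine ⟨ε + A * (1 + max T 0) ^ α, by positivity, fun t ht => ?_⟩
  rcases le_or_gt t (max T 0) with h | h
  · have : A * (1 + t) ^ α ≤ A * (1 + max T 0) ^ α := by
      gcongr
    nlinarith [mul_nonneg hε.le ht]
  · have hu : (0:ℝ) < 1 + t := by linarith
    have hTu : T ≤ 1 + t := by
      have := le_max_left T 0; linarith
    have h2 : (1 + t) ^ (α - 1) ≤ ε / A := hT _ hTu
    have h3 : (1 + t) ^ α = (1 + t) ^ (α - 1) * (1 + t) := by
      rw [← Real.rpow_add_one hu.ne' (α - 1)]; ring_nf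
    have h4 : A * (1 + t) ^ α ≤ A * ((ε / A) * (1 + t)) := by
      rw [h3]
      have := mul_le_mul_of_nonneg_right h2 hu.le
      nlinarith
    have h5 : A * ((ε / A) * (1 + t)) = ε * (1 + t) := by
      field_simp
    nlinarith [Real.rpow_nonneg (by positivity : (0:ℝ) ≤ 1 + max T 0) α]

set_option maxHeartbeats 1000000 in
/-- A non-constant Dirichlet series f(s) = 1 + ∑ aₙ e^{−λₙ s} has order
o(f) ≥ 1: if f = F/G with F, G entire satisfying
‖F(s)‖, ‖G(s)‖ ≤ exp(A(1+‖s‖)^α), then α ≥ 1. -/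
theorem stmt6 (a : ℕ → ℂ) (lam : ℕ → ℝ)
    (hpos : 0 < lam 0) (hmono : StrictMono lam)
    (htend : Filter.Tendsto lam Filter.atTop Filter.atTop)
    (σb : ℝ) (hconv : Summable fun n => ‖a n‖ * Real.exp (-(lam n) * σb))
    (hnonconst : ∃ n, a n ≠ 0)
    (F G : ℂ → ℂ) (hF : Differentiable ℂ F) (hG : Differentiable ℂ G)
    (hGne : ∃ s, G s ≠ 0)
    (hquot : ∀ s : ℂ, σb < s.re →
      G s * (1 + ∑' n, a n * Complex.exp (-(lam n : ℂ) * s)) = F s)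
    (A : ℝ) (hA : 0 < A) (α : ℝ) (hα : 0 ≤ α)
    (hFgrowth : ∀ s : ℂ, ‖F s‖ ≤ Real.exp (A * (1 + ‖s‖) ^ α))
    (hGgrowth : ∀ s : ℂ, ‖G s‖ ≤ Real.exp (A * (1 + ‖s‖) ^ α)) :
    1 ≤ α := by
  by_contra hcon
  push_neg at hcon
  -- basic facts about `lam`
  have hlam : ∀ n, 0 < lam n := fun n => hpos.trans_le (hmono.monotone (Nat.zero_le n))
  have hlam0 : ∀ n, lam 0 ≤ lam n := fun n => hmono.monotone (Nat.zero_le n)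
  set g : ℂ → ℂ := fun s => ∑' n, a n * Complex.exp (-(lam n : ℂ) * s) with hg_def
  set C : ℝ := ∑' n, ‖a n‖ * Real.exp (-(lam n) * σb) with hC_def
  have hC0 : 0 ≤ C := tsum_nonneg fun n => by positivity
  -- norm of each term
  have hterm : ∀ (n : ℕ) (s : ℂ), ‖a n * Complex.exp (-(lam n : ℂ) * s)‖
      = ‖a n‖ * Real.exp (-(lam n) * s.re) := by
    intro n s
    rw [norm_mul, Complex.norm_exp]
    congr 2
    simp [Complex.mul_re]
  -- termwise bound on the half-plane
  have htermle : ∀ (n : ℕ) (s : ℂ), σb ≤ s.re →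
      ‖a n * Complex.exp (-(lam n : ℂ) * s)‖ ≤ ‖a n‖ * Real.exp (-(lam n) * σb) := by
    intro n s hs
    rw [hterm]
    refine mul_le_mul_of_nonneg_left (Real.exp_le_exp.2 ?_) (norm_nonneg _)
    nlinarith [hlam n]
  have hsum : ∀ s : ℂ, σb ≤ s.re → Summable (fun n => a n * Complex.exp (-(lam n : ℂ) * s)) :=
    fun s hs => Summable.of_norm_bounded hconv (fun n => htermle n s hs)
  have hsumnorm : ∀ s : ℂ, σb ≤ s.re →
      Summable (fun n => ‖a n * Complex.exp (-(lam n : ℂ) * s)‖) :=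
    fun s hs => Summable.of_nonneg_of_le (fun n => norm_nonneg _) (fun n => htermle n s hs) hconv
  -- bound for g on the half-plane
  have hgbound : ∀ s : ℂ, σb ≤ s.re → ‖g s‖ ≤ C * Real.exp (-(lam 0) * (s.re - σb)) := by
    intro s hs
    have h1 : ‖g s‖ ≤ ∑' n, ‖a n * Complex.exp (-(lam n : ℂ) * s)‖ :=
      norm_tsum_le_tsum_norm (hsumnorm s hs)
    have h2 : ∑' n, ‖a n * Complex.exp (-(lam n : ℂ) * s)‖
        ≤ ∑' n, (‖a n‖ * Real.exp (-(lam n) * σb)) * Real.exp (-(lam 0) * (s.re - σb)) := by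
      apply Summable.tsum_le_tsum _ (hsumnorm s hs) (hconv.mul_right _)
      intro n
      rw [hterm, mul_assoc, ← Real.exp_add]
      refine mul_le_mul_of_nonneg_left (Real.exp_le_exp.2 ?_) (norm_nonneg _)
      nlinarith [hlam0 n, hlam n]
    calc ‖g s‖ ≤ _ := h1
      _ ≤ _ := h2
      _ = C * Real.exp (-(lam 0) * (s.re - σb)) := by rw [tsum_mul_right]
  -- the entire function H = F - G
  set H : ℂ → ℂ := fun s => F s - G s with hH_def
  have hHdiff : Differentiable ℂ H := hF.sub hG
  have hHhalf : ∀ s : ℂ, σb < s.re → H s = G s * g s := by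
    intro s hs
    have := hquot s hs
    simp only [hH_def, hg_def]
    linear_combination -this
  have hHgrowth : ∀ s : ℂ, ‖H s‖ ≤ 2 * Real.exp (A * (1 + ‖s‖) ^ α) := by
    intro s
    calc ‖H s‖ ≤ ‖F s‖ + ‖G s‖ := norm_sub_le _ _
      _ ≤ _ := by linarith [hFgrowth s, hGgrowth s]
  have hHhalfbound : ∀ s : ℂ, σb < s.re →
      ‖H s‖ ≤ C * Real.exp (A * (1 + ‖s‖) ^ α + (-(lam 0) * (s.re - σb))) := by
    intro s hs
    rw [hHhalf s hs, Real.exp_add]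
    calc ‖G s * g s‖ = ‖G s‖ * ‖g s‖ := norm_mul _ _
      _ ≤ Real.exp (A * (1 + ‖s‖) ^ α) * (C * Real.exp (-(lam 0) * (s.re - σb))) := by
          apply mul_le_mul (hGgrowth s) (hgbound s hs.le) (norm_nonneg _) (Real.exp_nonneg _)
      _ = _ := by ring
  -- choice of angle
  have hπ := Real.pi_pos
  set d : ℝ := Real.pi * (1 - α) / 4 with hd_def
  have hd0 : 0 < d := by
    have h1 : 0 < 1 - α := by linarith
    positivity
  have hd4 : d ≤ Real.pi / 4 := by nlinarith
  set θ : ℝ := Real.pi / 2 - d with hθ_def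
  have hθ1 : Real.pi / 4 ≤ θ := by rw [hθ_def]; linarith
  have hθ2 : θ < Real.pi / 2 := by rw [hθ_def]; linarith
  have hθ0 : 0 < θ := lt_of_lt_of_le (by positivity) hθ1
  have hαlt : α < Real.pi / (2 * Real.pi - θ - θ) := by
    have hw : 2 * Real.pi - θ - θ = Real.pi * (3 - α) / 2 := by rw [hθ_def, hd_def]; ring
    rw [hw, lt_div_iff₀ (by nlinarith)]
    nlinarith
  clear_value θ d
  set κ : ℝ := Real.cos θ with hκ_def
  have hκ0 : 0 < κ := Real.cos_pos_of_mem_Ioo ⟨by linarith, hθ2⟩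
  have hκ1 : κ ≤ 1 := Real.cos_le_one θ
  -- the sector bound
  obtain ⟨M₂, hM₂0, hM₂⟩ := aux_sublinear A (lam 0 * κ) α hA (by positivity) hα hcon
  set R : ℝ := max 1 ((|σb| + 1) / κ) with hR_def
  obtain ⟨M₁, hM₁⟩ := (isCompact_closedBall (0:ℂ) R).exists_bound_of_continuousOn
    hHdiff.continuous.continuousOn
  set Ms : ℝ := max M₁ (C * Real.exp (M₂ + lam 0 * σb)) with hMs_def
  have hsector : ∀ s : ℂ, κ * ‖s‖ ≤ s.re → ‖H s‖ ≤ Ms := by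
    intro s hs
    rcases le_or_gt (‖s‖) R with h | h
    · refine le_trans (hM₁ s ?_) (le_max_left _ _)
      simpa [Metric.mem_closedBall, Complex.dist_eq] using h
    · have hRs : (|σb| + 1) / κ ≤ ‖s‖ := le_trans (le_max_right _ _) h.le
      have habs : |σb| + 1 ≤ κ * ‖s‖ := by
        rw [div_le_iff₀ hκ0] at hRs
        nlinarith
      have hres : σb < s.re := by
        have := le_abs_self σb; linarith
      refine le_trans (hHhalfbound s hres) (le_trans ?_ (le_max_right _ _))
      refine mul_le_mul_of_nonneg_left (Real.exp_le_exp.2 ?_) hC0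
      have h1 := hM₂ (‖s‖) (norm_nonneg s)
      have h2 : lam 0 * (κ * ‖s‖) ≤ lam 0 * s.re :=
        mul_le_mul_of_nonneg_left hs hpos.le
      have h3 : ‖s‖ = ‖s‖ := rfl
      rw [h3]
      nlinarith
  -- Phragmen–Lindelöf on the complementary strip (via exp)
  have hK : ∀ w : ℂ, θ ≤ w.im → w.im ≤ 2 * Real.pi - θ → ‖H (Complex.exp w)‖ ≤ Ms := by
    intro w hw1 hw2
    refine PhragmenLindelof.horizontal_strip (f := fun w => H (Complex.exp w))
      (a := θ) (b := 2 * Real.pi - θ)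
      ((hHdiff.comp Complex.differentiable_exp).diffContOnCl) ?_ ?_ ?_ hw1 hw2
    · refine ⟨α, hαlt, A * 2 ^ α, Asymptotics.IsBigO.of_bound 2 (Filter.Eventually.of_forall ?_)⟩
      intro z
      have hb := hHgrowth (Complex.exp z)
      have habs : ‖Complex.exp z‖ = Real.exp z.re := Complex.norm_exp z
      have e1 : 1 + ‖Complex.exp z‖ ≤ 2 * Real.exp |z.re| := by
        rw [habs]
        have i1 := Real.exp_le_exp.2 (le_abs_self z.re)
        have i2 := Real.one_le_exp (abs_nonneg z.re)
        linarith
      have h1 : (1 + ‖Complex.exp z‖) ^ α ≤ 2 ^ α * Real.exp (α * |z.re|) := by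
        calc (1 + ‖Complex.exp z‖) ^ α ≤ (2 * Real.exp |z.re|) ^ α :=
              Real.rpow_le_rpow (by positivity) e1 hα
          _ = 2 ^ α * (Real.exp |z.re|) ^ α := Real.mul_rpow (by norm_num) (Real.exp_nonneg _)
          _ = 2 ^ α * Real.exp (α * |z.re|) := by rw [← Real.exp_mul, mul_comm α]
      have h2 : A * (1 + ‖Complex.exp z‖) ^ α ≤ A * 2 ^ α * Real.exp (α * |z.re|) := by
        rw [mul_assoc]
        exact mul_le_mul_of_nonneg_left h1 hA.le
      have h4 : ‖H (Complex.exp z)‖ ≤ 2 * Real.exp (A * 2 ^ α * Real.exp (α * |z.re|)) := by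
        refine le_trans hb (mul_le_mul_of_nonneg_left (Real.exp_le_exp.2 h2) (by norm_num))
      simpa [Real.abs_exp] using h4
    · intro z hz
      apply hsector
      rw [Complex.exp_re, Complex.norm_exp, hz, hκ_def]
      exact le_of_eq (mul_comm _ _)
    · intro z hz
      apply hsector
      rw [Complex.exp_re, Complex.norm_exp, hz, Real.cos_two_pi_sub, hκ_def]
      exact le_of_eq (mul_comm _ _)
  -- H is bounded everywhere
  have hbounded : ∀ z : ℂ, ‖H z‖ ≤ Ms := by
    intro z
    rcases le_or_gt (κ * ‖z‖) z.re with h | h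
    · exact hsector z h
    · have hz0 : z ≠ 0 := by
        rintro rfl
        simp at h
      have habspos : 0 < ‖z‖ := norm_pos_iff.2 hz0
      have hcosarg : Real.cos (Complex.arg z) < κ := by
        rw [Complex.cos_arg hz0, div_lt_iff₀ habspos]
        nlinarith
      have harg : θ < |Complex.arg z| := by
        by_contra hh
        push_neg at hh
        have : κ ≤ Real.cos |Complex.arg z| :=
          Real.cos_le_cos_of_nonneg_of_le_pi (abs_nonneg _) (by linarith) hh
        rw [Real.cos_abs] at this
        linarith
      set ψ : ℝ := if 0 ≤ Complex.arg z then Complex.arg z else Complex.arg z + 2 * Real.pi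
        with hψ_def
      have hψ1 : θ ≤ ψ := by
        rw [hψ_def]
        split_ifs with hif
        · rw [_root_.abs_of_nonneg hif] at harg; exact harg.le
        · push_neg at hif
          have := Complex.neg_pi_lt_arg z
          linarith
      have hψ2 : ψ ≤ 2 * Real.pi - θ := by
        rw [hψ_def]
        split_ifs with hif
        · have := Complex.arg_le_pi z
          linarith
        · push_neg at hif
          rw [_root_.abs_of_neg hif] at harg
          linarith
      have hexp : Complex.exp ((Real.log (‖z‖) : ℂ) + (ψ : ℂ) * Complex.I) = z := by
        rw [Complex.exp_add]
        have e1 : Complex.exp ((Real.log (‖z‖) : ℂ)) = (‖z‖ : ℂ) := by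
          rw [← Complex.ofReal_exp, Real.exp_log habspos]
        have e2 : Complex.exp ((ψ : ℂ) * Complex.I) = Complex.exp ((Complex.arg z : ℂ) * Complex.I) := by
          rw [hψ_def]
          split_ifs with hif
          · rfl
          · push_cast
            rw [add_mul, Complex.exp_add, Complex.exp_two_pi_mul_I, mul_one]
        rw [e1, e2, Complex.norm_mul_exp_arg_mul_I]
      have him : ((Real.log (‖z‖) : ℂ) + (ψ : ℂ) * Complex.I).im = ψ := by
        simp
      rw [← hexp]
      exact hK _ (by rw [him]; exact hψ1) (by rw [him]; exact hψ2)
  -- Liouville: H is constant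
  have hHconst : ∀ z w : ℂ, H z = H w := fun z w =>
    hHdiff.apply_eq_apply_of_bounded
      (isBounded_iff_forall_norm_le.2 ⟨Ms, by rintro x ⟨u, rfl⟩; exact hbounded u⟩) z w
  -- H vanishes identically
  obtain ⟨M₃, hM₃0, hM₃⟩ := aux_sublinear A (lam 0 / 2) α hA (by positivity) hα hcon
  have hH0 : ∀ z : ℂ, H z = 0 := by
    intro z
    have hev : ∀ᶠ x : ℝ in Filter.atTop,
        ‖H z‖ ≤ (C * Real.exp (M₃ + lam 0 * σb)) * Real.exp (-(lam 0 / 2) * x) := by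
      filter_upwards [Filter.eventually_gt_atTop (max σb 0)] with x hx
      have hx1 : σb < x := lt_of_le_of_lt (le_max_left _ _) hx
      have hx0 : 0 < x := lt_of_le_of_lt (le_max_right _ _) hx
      have hre : ((x : ℝ) : ℂ).re = x := Complex.ofReal_re x
      have hnx : ‖((x : ℝ) : ℂ)‖ = x := by
        rw [Complex.norm_of_nonneg hx0.le]
      have h1 := hHhalfbound ((x : ℝ) : ℂ) (by rw [hre]; exact hx1)
      rw [hre, hnx] at h1
      rw [hHconst z ((x : ℝ) : ℂ)]
      refine le_trans h1 ?_
      rw [mul_assoc, ← Real.exp_add]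
      refine mul_le_mul_of_nonneg_left (Real.exp_le_exp.2 ?_) hC0
      have h2 := hM₃ x hx0.le
      linarith
    have htend0 := aux_tend0 (C * Real.exp (M₃ + lam 0 * σb)) (lam 0 / 2) (by positivity)
    exact norm_le_zero_iff.1 (ge_of_tendsto htend0 hev)
  have hFG : ∀ s, F s = G s := by
    intro s
    have := hH0 s
    rw [hH_def] at this
    exact sub_eq_zero.1 this
  -- hence G * g = 0 on the half-plane
  have hGg : ∀ s : ℂ, σb < s.re → G s * g s = 0 := by
    intro s hs
    have h1 := hquot s hs
    have h2 := hFG s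
    linear_combination h1 + h2
  -- g is continuous on the closed half-plane
  have hopen : IsOpen {s : ℂ | σb < s.re} := isOpen_lt continuous_const Complex.continuous_re
  have hgcont : ContinuousOn g {s : ℂ | σb ≤ s.re} := by
    rw [hg_def]
    refine continuousOn_tsum (fun n => Continuous.continuousOn (by fun_prop)) hconv ?_
    intro n x hx
    exact htermle n x hx
  -- g vanishes on the half-plane
  have hgzero : ∀ s : ℂ, σb < s.re → g s = 0 := by
    intro z hz
    by_contra hgz
    have hmem : {s : ℂ | σb ≤ s.re} ∈ nhds z :=
      Filter.mem_of_superset (hopen.mem_nhds hz) fun w hw => by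
        have hw' : σb < w.re := hw
        exact le_of_lt hw'
    have hca : ContinuousAt g z := hgcont.continuousAt hmem
    have h1 : ∀ᶠ w in nhds z, g w ≠ 0 := hca.eventually_ne hgz
    have h2 : ∀ᶠ w in nhds z, σb < w.re := hopen.mem_nhds hz
    have h3 : G =ᶠ[nhds z] 0 := by
      filter_upwards [h1, h2] with w hw1 hw2
      exact (mul_eq_zero.1 (hGg w hw2)).resolve_right hw1
    obtain ⟨s₀, hs₀⟩ := hGne
    have hGan : AnalyticOnNhd ℂ G Set.univ := hG.differentiableOn.analyticOnNhd isOpen_univ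
    exact hs₀ (hGan.eqOn_zero_of_preconnected_of_eventuallyEq_zero isPreconnected_univ
      (Set.mem_univ z) h3 (Set.mem_univ s₀))
  -- uniqueness of Dirichlet series: the minimal nonzero coefficient
  set m := Nat.find hnonconst with hm_def
  have ham : a m ≠ 0 := Nat.find_spec hnonconst
  have hmin : ∀ k, k < m → a k = 0 := by
    intro k hk
    by_contra hak
    exact Nat.find_min hnonconst hk hak
  have hkey : ∀ x : ℝ, σb < x →
      ‖a m‖ * Real.exp (-(lam m) * x)
        ≤ C * Real.exp (-(lam (m+1)) * (x - σb)) := by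
    intro x hx
    have hxre : ((x : ℝ) : ℂ).re = x := Complex.ofReal_re x
    have hsx : Summable (fun n => a n * Complex.exp (-(lam n : ℂ) * ((x : ℝ) : ℂ))) :=
      hsum _ (by rw [hxre]; exact hx.le)
    set T : ℂ := ∑' n, (if n = m then 0 else a n * Complex.exp (-(lam n : ℂ) * ((x : ℝ) : ℂ)))
      with hT_def
    have hzero : a m * Complex.exp (-(lam m : ℂ) * ((x : ℝ) : ℂ)) + T = 0 := by
      rw [hT_def]
      calc a m * Complex.exp (-(lam m : ℂ) * ((x : ℝ) : ℂ))
            + ∑' n, (if n = m then 0 else a n * Complex.exp (-(lam n : ℂ) * ((x : ℝ) : ℂ)))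
          = ∑' n, a n * Complex.exp (-(lam n : ℂ) * ((x : ℝ) : ℂ)) :=
            (hsx.tsum_eq_add_tsum_ite m).symm
        _ = 0 := hgzero ((x : ℝ) : ℂ) (by rw [hxre]; exact hx)
    have heqT : ‖a m * Complex.exp (-(lam m : ℂ) * ((x : ℝ) : ℂ))‖ = ‖T‖ := by
      rw [eq_neg_of_add_eq_zero_left hzero, norm_neg]
    have hsnormite : Summable (fun n =>
        ‖if n = m then (0:ℂ) else a n * Complex.exp (-(lam n : ℂ) * ((x : ℝ) : ℂ))‖) := by
      refine Summable.of_nonneg_of_le (fun n => norm_nonneg _) ?_ hconv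
      intro n
      split_ifs with hnm
      · simp only [norm_zero]; positivity
      · exact htermle n _ (by rw [hxre]; exact hx.le)
    have h5 : ‖T‖ ≤ ∑' n,
        ‖if n = m then (0:ℂ) else a n * Complex.exp (-(lam n : ℂ) * ((x : ℝ) : ℂ))‖ :=
      norm_tsum_le_tsum_norm hsnormite
    have h6 : ∑' n, ‖if n = m then (0:ℂ) else a n * Complex.exp (-(lam n : ℂ) * ((x : ℝ) : ℂ))‖
        ≤ ∑' n, (‖a n‖ * Real.exp (-(lam n) * σb))
            * Real.exp (-(lam (m+1)) * (x - σb)) := by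
      refine Summable.tsum_le_tsum ?_ hsnormite (hconv.mul_right _)
      intro n
      split_ifs with hnm
      · simp only [norm_zero]; positivity
      · rcases lt_or_ge n m with hlt | hge
        · rw [hmin n hlt]
          simp only [zero_mul, norm_zero]
          positivity
        · have hge' : m + 1 ≤ n := lt_of_le_of_ne hge (Ne.symm hnm)
          rw [hterm, hxre, mul_assoc, ← Real.exp_add]
          refine mul_le_mul_of_nonneg_left (Real.exp_le_exp.2 ?_) (norm_nonneg _)
          have hlam1 : lam (m+1) ≤ lam n := hmono.monotone hge'
          nlinarith [hx.le, hlam (m+1)]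
    have h7 : ∑' n, (‖a n‖ * Real.exp (-(lam n) * σb))
        * Real.exp (-(lam (m+1)) * (x - σb)) = C * Real.exp (-(lam (m+1)) * (x - σb)) := by
      rw [tsum_mul_right]
    calc ‖a m‖ * Real.exp (-(lam m) * x)
        = ‖a m * Complex.exp (-(lam m : ℂ) * ((x : ℝ) : ℂ))‖ := by rw [hterm, hxre]
      _ = ‖T‖ := heqT
      _ ≤ _ := h5
      _ ≤ _ := h6
      _ = _ := h7
  have hfin : ∀ᶠ x : ℝ in Filter.atTop, ‖a m‖
      ≤ (C * Real.exp (lam (m+1) * σb)) * Real.exp (-(lam (m+1) - lam m) * x) := by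
    filter_upwards [Filter.eventually_gt_atTop σb] with x hx
    have h1 := hkey x hx
    have e0 : -(lam m) * x + lam m * x = 0 := by ring
    calc ‖a m‖
        = (‖a m‖ * Real.exp (-(lam m) * x)) * Real.exp (lam m * x) := by
          rw [mul_assoc, ← Real.exp_add, e0, Real.exp_zero, mul_one]
      _ ≤ (C * Real.exp (-(lam (m+1)) * (x - σb))) * Real.exp (lam m * x) :=
          mul_le_mul_of_nonneg_right h1 (Real.exp_nonneg _)
      _ = (C * Real.exp (lam (m+1) * σb)) * Real.exp (-(lam (m+1) - lam m) * x) := by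
          rw [mul_assoc, ← Real.exp_add, mul_assoc, ← Real.exp_add]
          congr 1
          · congr 1
            ring
  have htendm := aux_tend0 (C * Real.exp (lam (m+1) * σb)) (lam (m+1) - lam m)
    (by linarith [hmono (Nat.lt_succ_self m)])
  have hle0 : ‖a m‖ ≤ 0 := ge_of_tendsto htendm hfin
  exact ham (norm_eq_zero.1 (le_antisymm hle0 (norm_nonneg _)))
end

section
/- Let f(s) = 1 + ∑_{n≥1} aₙ e^{−λₙ s} be a Dirichlet series and let s ∈ ℂ be such that ∑_{n≥1} |aₙ| e^{−λₙ Re s} < 1. Then the family, indexed by the finitely supported sequences 𝐤 = (kₙ)_{n≥1} of natural numbers with ‖𝐤‖ = ∑ₙ kₙ ≥ 1, of terms b_𝐤 e^{−⟨λ,𝐤⟩ s} with b_𝐤 = ((−1)^{‖𝐤‖}/‖𝐤‖) · (‖𝐤‖!/∏ⱼ kⱼ!) · ∏ⱼ aⱼ^{kⱼ} and ⟨λ,𝐤⟩ = ∑ₙ λₙ kₙ, is absolutely summable, and its sum equals −log f(s), where log denotes the principal branch of the complex logarithm. -/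
open Complex

open Finset

/-- The total degree ‖𝐤‖ = ∑ₙ kₙ of a finitely supported sequence of naturals. -/
def kNorm (k : ℕ →₀ ℕ) : ℕ := k.sum fun _ v => v

lemma kNorm_eq_sum (k : ℕ →₀ ℕ) : kNorm k = ∑ j ∈ k.support, k j := rfl

lemma kNorm_eq_sum_of_subset {k : ℕ →₀ ℕ} {t : Finset ℕ} (h : k.support ⊆ t) :
    kNorm k = ∑ j ∈ t, k j := by
  rw [kNorm_eq_sum]
  exact Finset.sum_subset h (fun i _ hi => Finsupp.notMem_support_iff.mp hi)

lemma multinomial_subset {k : ℕ →₀ ℕ} {t : Finset ℕ} (h : k.support ⊆ t) :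
    Nat.multinomial t k = Nat.multinomial k.support k := by
  unfold Nat.multinomial
  congr 1
  · rw [← kNorm_eq_sum_of_subset h, kNorm_eq_sum]
  · exact (Finset.prod_subset h (fun i _ hi => by
      rw [Finsupp.notMem_support_iff.mp hi]; rfl)).symm

lemma prod_pow_subset {R : Type*} [CommMonoid R] {k : ℕ →₀ ℕ} {t : Finset ℕ}
    (h : k.support ⊆ t) (c : ℕ → R) :
    ∏ j ∈ t, c j ^ k j = ∏ j ∈ k.support, c j ^ k j :=
  (Finset.prod_subset h (fun i _ hi => by
    rw [Finsupp.notMem_support_iff.mp hi, pow_zero])).symm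

/-- Multinomial theorem over `finsuppAntidiag`. -/
lemma sum_pow_finsuppAntidiag {R : Type*} [CommSemiring R] (t : Finset ℕ) (c : ℕ → R) (m : ℕ) :
    (∑ i ∈ t, c i) ^ m =
      ∑ k ∈ t.finsuppAntidiag m,
        (Nat.multinomial k.support k : R) * ∏ j ∈ k.support, c j ^ k j := by
  classical
  rw [Finset.sum_pow_eq_sum_piAntidiag t c m]
  refine Finset.sum_bij'
    (i := fun f hf => Finsupp.onFinset t f (fun a ha => (Finset.mem_piAntidiag.mp hf).2 a ha))
    (j := fun k _ => ⇑k) ?_ ?_ ?_ ?_ ?_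
  · intro f hf
    rw [Finset.mem_finsuppAntidiag]
    obtain ⟨h1, h2⟩ := Finset.mem_piAntidiag.mp hf
    constructor
    · simpa using h1
    · intro a ha
      exact h2 a (by simpa [Finsupp.mem_support_iff] using ha)
  · intro k hk
    rw [Finset.mem_finsuppAntidiag] at hk
    rw [Finset.mem_piAntidiag]
    exact ⟨hk.1, fun i hi => hk.2 (Finsupp.mem_support_iff.mpr hi)⟩
  · intro f _; rfl
  · intro k _; ext a; rfl
  · intro f hf
    have hsupp : (Finsupp.onFinset t f (fun a ha => (Finset.mem_piAntidiag.mp hf).2 a ha)).support ⊆ t :=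
      Finsupp.support_onFinset_subset
    rw [← multinomial_subset hsupp, ← prod_pow_subset hsupp c]
    rfl

lemma sum_fiber_le (c : ℕ → ℝ) (hc0 : ∀ n, 0 ≤ c n) (hc : Summable c) (m : ℕ)
    (F : Finset (ℕ →₀ ℕ)) (hF : ∀ k ∈ F, kNorm k = m) :
    ∑ k ∈ F, (Nat.multinomial k.support k : ℝ) * ∏ j ∈ k.support, c j ^ k j
      ≤ (∑' n, c n) ^ m := by
  classical
  set t := F.sup Finsupp.support with ht
  have hsub : F ⊆ t.finsuppAntidiag m := by
    intro k hk
    have hsupp : k.support ⊆ t := Finset.le_sup hk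
    rw [Finset.mem_finsuppAntidiag]
    exact ⟨(kNorm_eq_sum_of_subset hsupp).symm.trans (hF k hk), hsupp⟩
  have h1 : ∑ k ∈ F, (Nat.multinomial k.support k : ℝ) * ∏ j ∈ k.support, c j ^ k j
      ≤ ∑ k ∈ t.finsuppAntidiag m,
          (Nat.multinomial k.support k : ℝ) * ∏ j ∈ k.support, c j ^ k j := by
    refine Finset.sum_le_sum_of_subset_of_nonneg hsub (fun k _ _ => ?_)
    exact mul_nonneg (Nat.cast_nonneg _)
      (Finset.prod_nonneg fun j _ => pow_nonneg (hc0 j) _)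
  refine h1.trans ?_
  rw [← sum_pow_finsuppAntidiag t c m]
  exact pow_le_pow_left₀ (Finset.sum_nonneg fun i _ => hc0 i)
    (Summable.sum_le_tsum t (fun i _ => hc0 i) hc) m

lemma fiber_summable_norm (c : ℕ → ℝ) (hc0 : ∀ n, 0 ≤ c n) (hc : Summable c) (m : ℕ) :
    Summable (fun k : {k : ℕ →₀ ℕ // kNorm k = m} =>
      (Nat.multinomial k.1.support k.1 : ℝ) * ∏ j ∈ k.1.support, c j ^ k.1 j) := by
  refine summable_of_sum_le (c := (∑' n, c n) ^ m)
    (fun k => mul_nonneg (Nat.cast_nonneg _)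
      (Finset.prod_nonneg fun j _ => pow_nonneg (hc0 j) _)) (fun u => ?_)
  have hmap := Finset.sum_map u ⟨Subtype.val, Subtype.val_injective⟩
    (fun k => (Nat.multinomial k.support k : ℝ) * ∏ j ∈ k.support, c j ^ k j)
  simp only [Function.Embedding.coeFn_mk] at hmap
  rw [← hmap]
  refine sum_fiber_le c hc0 hc m _ ?_
  simp only [Finset.mem_map, Function.Embedding.coeFn_mk]
  rintro k ⟨⟨k', hk'⟩, _, rfl⟩
  exact hk'

lemma fiber_tsum_norm_le (c : ℕ → ℝ) (hc0 : ∀ n, 0 ≤ c n) (hc : Summable c) (m : ℕ) :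
    (∑' k : {k : ℕ →₀ ℕ // kNorm k = m},
      (Nat.multinomial k.1.support k.1 : ℝ) * ∏ j ∈ k.1.support, c j ^ k.1 j)
      ≤ (∑' n, c n) ^ m := by
  refine Summable.tsum_le_of_sum_le (fiber_summable_norm c hc0 hc m) (fun u => ?_)
  have hmap := Finset.sum_map u ⟨Subtype.val, Subtype.val_injective⟩
    (fun k => (Nat.multinomial k.support k : ℝ) * ∏ j ∈ k.support, c j ^ k j)
  simp only [Function.Embedding.coeFn_mk] at hmap
  rw [← hmap]
  refine sum_fiber_le c hc0 hc m _ ?_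
  simp only [Finset.mem_map, Function.Embedding.coeFn_mk]
  rintro k ⟨⟨k', hk'⟩, _, rfl⟩
  exact hk'

lemma norm_gterm (c : ℕ → ℂ) (k : ℕ →₀ ℕ) :
    ‖(Nat.multinomial k.support k : ℂ) * ∏ j ∈ k.support, c j ^ k j‖
      = (Nat.multinomial k.support k : ℝ) * ∏ j ∈ k.support, ‖c j‖ ^ k j := by
  rw [norm_mul, Complex.norm_natCast]
  congr 1
  rw [norm_prod]
  exact Finset.prod_congr rfl fun j _ => norm_pow _ _

lemma fiber_hasSum (c : ℕ → ℂ) (hc : Summable fun n => ‖c n‖) (m : ℕ) :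
    HasSum (fun k : {k : ℕ →₀ ℕ // kNorm k = m} =>
      (Nat.multinomial k.1.support k.1 : ℂ) * ∏ j ∈ k.1.support, c j ^ k.1 j)
      ((∑' n, c n) ^ m) := by
  classical
  set g : (ℕ →₀ ℕ) → ℂ :=
    fun k => (Nat.multinomial k.support k : ℂ) * ∏ j ∈ k.support, c j ^ k j with hg
  have hsumm : Summable (fun k : {k : ℕ →₀ ℕ // kNorm k = m} => g k.1) := by
    refine Summable.of_norm ?_
    have := fiber_summable_norm (fun n => ‖c n‖) (fun n => norm_nonneg _) hc m
    convert this using 2 with k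
    exact norm_gterm c k.1
  -- the exhausting sequence of finsets
  set A : ℕ → Finset {k : ℕ →₀ ℕ // kNorm k = m} :=
    fun N => ((Finset.range N).finsuppAntidiag m).subtype (fun k => kNorm k = m) with hA
  have hAmono : Monotone A := by
    intro M N hMN
    refine Finset.subtype_mono ?_
    intro k hk
    rw [Finset.mem_finsuppAntidiag] at hk ⊢
    have hsub : k.support ⊆ Finset.range N := hk.2.trans (by
      exact Finset.range_subset_range.mpr hMN)
    exact ⟨(kNorm_eq_sum_of_subset hsub).symm.trans
      ((kNorm_eq_sum_of_subset hk.2).trans hk.1), hsub⟩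
  have hAtend : Filter.Tendsto A Filter.atTop Filter.atTop := by
    refine Filter.tendsto_atTop_finset_of_monotone hAmono (fun x => ?_)
    obtain ⟨N, hN⟩ := x.1.support.exists_nat_subset_range
    refine ⟨N, ?_⟩
    rw [hA, Finset.mem_subtype, Finset.mem_finsuppAntidiag]
    exact ⟨(kNorm_eq_sum_of_subset hN).symm.trans x.2, hN⟩
  have h2 : ∀ N, ∑ k ∈ A N, g k.1 = (∑ i ∈ Finset.range N, c i) ^ m := by
    intro N
    rw [hA, Finset.sum_subtype_of_mem (fun k => g k) (fun k hk => by
      rw [Finset.mem_finsuppAntidiag] at hk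
      exact (kNorm_eq_sum_of_subset hk.2).trans hk.1)]
    exact (sum_pow_finsuppAntidiag _ c m).symm
  have h1 : Filter.Tendsto (fun N => ∑ k ∈ A N, g k.1) Filter.atTop
      (nhds (∑' k : {k : ℕ →₀ ℕ // kNorm k = m}, g k.1)) :=
    hsumm.hasSum.comp hAtend
  have h3 : Filter.Tendsto (fun N => (∑ i ∈ Finset.range N, c i) ^ m) Filter.atTop
      (nhds ((∑' n, c n) ^ m)) :=
    (hc.of_norm.hasSum.tendsto_sum_nat).pow m
  have : (∑' k : {k : ℕ →₀ ℕ // kNorm k = m}, g k.1) = (∑' n, c n) ^ m := by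
    refine tendsto_nhds_unique ?_ h3
    simpa only [h2] using h1
  exact this ▸ hsumm.hasSum

lemma kNorm_eq_zero_iff {k : ℕ →₀ ℕ} : kNorm k = 0 ↔ k = 0 := by
  rw [kNorm_eq_sum, Finset.sum_eq_zero_iff]
  constructor
  · intro h
    ext j
    by_contra hj
    exact hj (h j (Finsupp.mem_support_iff.mpr hj))
  · rintro rfl
    simp

/-- The coefficient b_𝐤 = ((−1)^‖𝐤‖/‖𝐤‖)·(‖𝐤‖!/∏ⱼ kⱼ!)·∏ⱼ aⱼ^{kⱼ}. -/
noncomputable def bcoef (a : ℕ → ℂ) (k : ℕ →₀ ℕ) : ℂ :=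
  ((-1 : ℂ) ^ (kNorm k) / (kNorm k : ℂ)) *
    ((Nat.factorial (kNorm k) : ℂ) /
      ∏ j ∈ k.support, (Nat.factorial (k j) : ℂ)) *
    ∏ j ∈ k.support, a j ^ k j

/-- The pairing ⟨λ,𝐤⟩ = ∑ₙ λₙ kₙ. -/
def lamPair (lam : ℕ → ℝ) (k : ℕ →₀ ℕ) : ℝ := k.sum fun n v => lam n * v

lemma factorial_ratio_eq (k : ℕ →₀ ℕ) :
    (Nat.factorial (kNorm k) : ℂ) / ∏ j ∈ k.support, (Nat.factorial (k j) : ℂ)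
      = (Nat.multinomial k.support k : ℂ) := by
  have hspec := Nat.multinomial_spec k.support k
  have hprodne : (∏ j ∈ k.support, (Nat.factorial (k j) : ℂ)) ≠ 0 :=
    Finset.prod_ne_zero_iff.mpr fun j _ => Nat.cast_ne_zero.mpr (Nat.factorial_ne_zero _)
  rw [div_eq_iff hprodne, kNorm_eq_sum]
  rw [← Nat.cast_prod, ← Nat.cast_mul, mul_comm, hspec]

lemma exp_lamPair (lam : ℕ → ℝ) (s : ℂ) (k : ℕ →₀ ℕ) :
    Complex.exp (-(lamPair lam k : ℂ) * s)
      = ∏ j ∈ k.support, Complex.exp (-(lam j : ℂ) * s) ^ k j := by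
  have h1 : (-(lamPair lam k : ℂ) * s) = ∑ j ∈ k.support, (k j : ℂ) * (-(lam j : ℂ) * s) := by
    have : (lamPair lam k : ℂ) = ∑ j ∈ k.support, ((lam j : ℂ) * (k j : ℂ)) := by
      unfold lamPair Finsupp.sum
      push_cast
      rfl
    rw [this, ← Finset.sum_neg_distrib, Finset.sum_mul]
    exact Finset.sum_congr rfl fun j _ => by ring
  rw [h1, Complex.exp_sum]
  exact Finset.prod_congr rfl fun j _ => by
    rw [← Complex.exp_nat_mul]

lemma term_eq (a : ℕ → ℂ) (lam : ℕ → ℝ) (s : ℂ) (k : ℕ →₀ ℕ) :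
    bcoef a k * Complex.exp (-(lamPair lam k : ℂ) * s)
      = ((-1 : ℂ) ^ (kNorm k) / (kNorm k : ℂ)) *
        ((Nat.multinomial k.support k : ℂ) *
          ∏ j ∈ k.support, (a j * Complex.exp (-(lam j : ℂ) * s)) ^ k j) := by
  unfold bcoef
  rw [factorial_ratio_eq, exp_lamPair]
  rw [mul_assoc, mul_assoc]
  congr 1
  congr 1
  rw [← Finset.prod_mul_distrib]
  exact Finset.prod_congr rfl fun j _ => (mul_pow _ _ _).symm

noncomputable def fibEquiv : {k : ℕ →₀ ℕ // k ≠ 0} ≃ Σ m : ℕ, {k : ℕ →₀ ℕ // kNorm k = m + 1} where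
  toFun x := ⟨kNorm x.1 - 1, ⟨x.1, by
    have : kNorm x.1 ≠ 0 := fun h => x.2 (kNorm_eq_zero_iff.mp h)
    omega⟩⟩
  invFun y := ⟨y.2.1, fun h => by
    have := y.2.2
    rw [h] at this
    simp [kNorm_eq_zero_iff.mpr rfl] at this⟩
  left_inv x := rfl
  right_inv := by
    rintro ⟨m, k, hk⟩
    have hm : kNorm k - 1 = m := by omega
    subst hm
    rfl

set_option maxHeartbeats 1000000 in
/-- Expansion of −log f(s) for a Dirichlet series f(s) = 1 + ∑ aₙ e^{−λₙ s}
at a point s with ∑ |aₙ| e^{−λₙ Re s} < 1: the family b_𝐤 e^{−⟨λ,𝐤⟩ s} over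
finitely supported 𝐤 ≠ 0 is absolutely summable with sum −log f(s). -/
theorem stmt12 (a : ℕ → ℂ) (lam : ℕ → ℝ)
    (hpos : 0 < lam 0) (hmono : StrictMono lam)
    (htend : Filter.Tendsto lam Filter.atTop Filter.atTop)
    (σb : ℝ) (hconv : Summable fun n => ‖a n‖ * Real.exp (-(lam n) * σb))
    (s : ℂ)
    (hs : Summable fun n => ‖a n‖ * Real.exp (-(lam n) * s.re))
    (hs1 : (∑' n, ‖a n‖ * Real.exp (-(lam n) * s.re)) < 1) :
    Summable (fun k : {k : ℕ →₀ ℕ // k ≠ 0} =>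
      ‖bcoef a k.1 * Complex.exp (-(lamPair lam k.1 : ℂ) * s)‖) ∧
    (∑' k : {k : ℕ →₀ ℕ // k ≠ 0},
        bcoef a k.1 * Complex.exp (-(lamPair lam k.1 : ℂ) * s)) =
      -Complex.log (1 + ∑' n, a n * Complex.exp (-(lam n : ℂ) * s)) := by
  classical
  set c : ℕ → ℂ := fun n => a n * Complex.exp (-(lam n : ℂ) * s) with hcdef
  have hnormc : ∀ n, ‖c n‖ = ‖a n‖ * Real.exp (-(lam n) * s.re) := by
    intro n
    rw [hcdef]
    simp only [norm_mul]
    congr 1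
    rw [Complex.norm_exp]
    congr 1
    simp [Complex.mul_re]
  have hcn : Summable fun n => ‖c n‖ := by
    simpa only [hnormc] using hs
  have hR1 : (∑' n, ‖c n‖) < 1 := by
    simpa only [hnormc] using hs1
  have hR0 : (0:ℝ) ≤ ∑' n, ‖c n‖ := tsum_nonneg fun n => norm_nonneg _
  have hznorm : ‖∑' n, c n‖ < 1 := lt_of_le_of_lt (norm_tsum_le_tsum_norm hcn) hR1
  have hterm : ∀ (k : ℕ →₀ ℕ), bcoef a k * Complex.exp (-(lamPair lam k : ℂ) * s) =
      ((-1:ℂ) ^ kNorm k / (kNorm k : ℂ)) *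
        ((Nat.multinomial k.support k : ℂ) * ∏ j ∈ k.support, c j ^ k j) :=
    term_eq a lam s
  have hnormterm : ∀ (m : ℕ) (k : ℕ →₀ ℕ), kNorm k = m + 1 →
      ‖bcoef a k * Complex.exp (-(lamPair lam k : ℂ) * s)‖ =
        (1 / (m+1 : ℝ)) *
          ((Nat.multinomial k.support k : ℝ) * ∏ j ∈ k.support, ‖c j‖ ^ k j) := by
    intro m k hk
    rw [hterm k, hk, norm_mul, norm_gterm]
    congr 1
    rw [norm_div, norm_pow, norm_neg, norm_one, one_pow, Complex.norm_natCast]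
    push_cast
    ring
  have hfibsum : ∀ m : ℕ, Summable (fun k : {k : ℕ →₀ ℕ // kNorm k = m + 1} =>
      ‖bcoef a k.1 * Complex.exp (-(lamPair lam k.1 : ℂ) * s)‖) := by
    intro m
    have h := ((fiber_summable_norm (fun n => ‖c n‖) (fun n => norm_nonneg _)
      hcn (m+1)).mul_left (1/(m+1:ℝ)))
    exact h.congr fun k => (hnormterm m k.1 k.2).symm
  have hfibtsum : ∀ m : ℕ, (∑' k : {k : ℕ →₀ ℕ // kNorm k = m+1},
      ‖bcoef a k.1 * Complex.exp (-(lamPair lam k.1 : ℂ) * s)‖) ≤ (∑' n, ‖c n‖) ^ (m+1) := by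
    intro m
    have h1 : (∑' k : {k : ℕ →₀ ℕ // kNorm k = m+1},
        ‖bcoef a k.1 * Complex.exp (-(lamPair lam k.1 : ℂ) * s)‖)
        = (1/(m+1:ℝ)) * ∑' k : {k : ℕ →₀ ℕ // kNorm k = m+1},
            ((Nat.multinomial k.1.support k.1 : ℝ) * ∏ j ∈ k.1.support, ‖c j‖ ^ k.1 j) := by
      rw [← tsum_mul_left]
      exact tsum_congr fun k => hnormterm m k.1 k.2
    rw [h1]
    have h2 := fiber_tsum_norm_le (fun n => ‖c n‖) (fun n => norm_nonneg _) hcn (m+1)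
    have h3 : (0:ℝ) ≤ ∑' k : {k : ℕ →₀ ℕ // kNorm k = m+1},
        ((Nat.multinomial k.1.support k.1 : ℝ) * ∏ j ∈ k.1.support, ‖c j‖ ^ k.1 j) :=
      tsum_nonneg fun k => mul_nonneg (Nat.cast_nonneg _)
        (Finset.prod_nonneg fun j _ => pow_nonneg (norm_nonneg _) _)
    calc (1/(m+1:ℝ)) * _ ≤ 1 * ((∑' n, ‖c n‖) ^ (m+1)) := by
          refine mul_le_mul ?_ h2 h3 zero_le_one
          rw [div_le_one (by positivity)]
          linarith [(Nat.cast_nonneg (α := ℝ) m)]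
      _ = (∑' n, ‖c n‖) ^ (m+1) := one_mul _
  have hsigma : Summable (fun y : Σ m : ℕ, {k : ℕ →₀ ℕ // kNorm k = m+1} =>
      ‖bcoef a y.2.1 * Complex.exp (-(lamPair lam y.2.1 : ℂ) * s)‖) := by
    rw [summable_sigma_of_nonneg (fun y => norm_nonneg _)]
    refine ⟨fun m => hfibsum m, ?_⟩
    refine Summable.of_nonneg_of_le (fun m => tsum_nonneg fun k => norm_nonneg _)
      (fun m => hfibtsum m) ?_
    exact ((summable_geometric_of_lt_one hR0 hR1).mul_left (∑' n, ‖c n‖)).congr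
      (fun m => by rw [pow_succ]; ring)
  have hsum1 : Summable (fun k : {k : ℕ →₀ ℕ // k ≠ 0} =>
      ‖bcoef a k.1 * Complex.exp (-(lamPair lam k.1 : ℂ) * s)‖) := by
    have h := (fibEquiv.summable_iff (f := fun y : Σ m : ℕ, {k : ℕ →₀ ℕ // kNorm k = m+1} =>
      ‖bcoef a y.2.1 * Complex.exp (-(lamPair lam y.2.1 : ℂ) * s)‖)).mpr hsigma
    exact h.congr fun k => rfl
  constructor
  · exact hsum1
  -- value
  have hFsigma : Summable (fun y : Σ m : ℕ, {k : ℕ →₀ ℕ // kNorm k = m+1} =>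
      bcoef a y.2.1 * Complex.exp (-(lamPair lam y.2.1 : ℂ) * s)) := hsigma.of_norm
  have hts : (∑' k : {k : ℕ →₀ ℕ // k ≠ 0},
      bcoef a k.1 * Complex.exp (-(lamPair lam k.1 : ℂ) * s))
      = ∑' y : Σ m : ℕ, {k : ℕ →₀ ℕ // kNorm k = m+1},
          bcoef a y.2.1 * Complex.exp (-(lamPair lam y.2.1 : ℂ) * s) :=
    (fibEquiv.tsum_eq (f := fun y : Σ m : ℕ, {k : ℕ →₀ ℕ // kNorm k = m+1} =>
      bcoef a y.2.1 * Complex.exp (-(lamPair lam y.2.1 : ℂ) * s))).symm ▸ rfl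
  rw [hts, Summable.tsum_sigma hFsigma]
  have hinner : ∀ m : ℕ, (∑' k : {k : ℕ →₀ ℕ // kNorm k = m+1},
      bcoef a k.1 * Complex.exp (-(lamPair lam k.1 : ℂ) * s)) =
      ((-1:ℂ)^(m+1) / ((m+1:ℕ) : ℂ)) * (∑' n, c n)^(m+1) := by
    intro m
    have hfib := fiber_hasSum c hcn (m+1)
    have h1 : (∑' k : {k : ℕ →₀ ℕ // kNorm k = m+1},
        bcoef a k.1 * Complex.exp (-(lamPair lam k.1 : ℂ) * s)) =
        ∑' k : {k : ℕ →₀ ℕ // kNorm k = m+1}, ((-1:ℂ)^(m+1) / ((m+1:ℕ):ℂ)) *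
          ((Nat.multinomial k.1.support k.1 : ℂ) * ∏ j ∈ k.1.support, c j ^ k.1 j) :=
      tsum_congr fun k => by rw [hterm k.1, k.2]
    rw [h1, tsum_mul_left, hfib.tsum_eq]
  have hlog := Complex.hasSum_taylorSeries_log hznorm
  have hneg := hlog.neg
  have hshift : HasSum (fun m : ℕ => -((-1:ℂ)^(m+1+1) * (∑' n, c n)^(m+1) / ((m+1 : ℕ):ℂ)))
      (-Complex.log (1 + ∑' n, c n)) := by
    refine (hasSum_nat_add_iff (f := fun n : ℕ => -((-1:ℂ)^(n+1) * (∑' i, c i)^n / (n:ℂ))) 1).mpr ?_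
    simpa using hneg
  have hfinal : HasSum (fun m : ℕ => ((-1:ℂ)^(m+1) / ((m+1:ℕ):ℂ)) * (∑' n, c n)^(m+1))
      (-Complex.log (1 + ∑' n, c n)) := by
    have heq : ∀ m : ℕ, -((-1:ℂ)^(m+1+1) * (∑' n, c n)^(m+1) / ((m+1:ℕ):ℂ))
        = ((-1:ℂ)^(m+1) / ((m+1:ℕ):ℂ)) * (∑' n, c n)^(m+1) := by
      intro m
      push_cast
      rw [pow_succ]
      ring
    exact (funext heq : _) ▸ hshift
  rw [tsum_congr hinner]
  exact hfinal.tsum_eq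
end

section
/- For every complex number s with c = Re s > 0, one has ‖∫₀^∞ (s/(s² + t²)) · (t/(e^{2πt} − 1)) dt‖ ≤ 1/(24 c). In particular, for every real t ≥ 0 and s with Re s = c > 0 one has |s/(s² + t²)| ≤ 1/c. -/
open Complex Real MeasureTheory

private lemma cubic_le_exp {x : ℝ} (hx : 0 ≤ x) :
    x + x ^ 2 / 2 + x ^ 3 / 6 ≤ Real.exp x - 1 := by
  have h := Real.sum_le_exp_of_nonneg hx 4
  simp [Finset.sum_range_succ, Nat.factorial] at h
  nlinarith [h]

private lemma exp_gt_one {t : ℝ} (ht : 0 < t) : (1 : ℝ) < Real.exp (2 * π * t) := by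
  have : (0 : ℝ) < 2 * π * t := by positivity
  calc (1:ℝ) = Real.exp 0 := by simp
  _ < Real.exp (2 * π * t) := Real.exp_lt_exp.mpr this

private lemma h_bound {t : ℝ} (ht : 0 < t) :
    t / (Real.exp (2 * π * t) - 1) ≤ 1 / (2 * π * (1 + t ^ 2)) := by
  have hE := exp_gt_one ht
  have hc := cubic_le_exp (x := 2 * π * t) (by positivity)
  have hπ := Real.pi_gt_three
  rw [div_le_div_iff₀ (by linarith) (by positivity)]
  have hπ3 : 2 * π ≤ (4/3) * π ^ 3 := by
    nlinarith [Real.pi_gt_three, Real.pi_pos,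
      mul_nonneg (mul_nonneg (by linarith [Real.pi_gt_three] : (0:ℝ) ≤ π - 3)
        Real.pi_pos.le) Real.pi_pos.le]
  nlinarith [mul_le_mul_of_nonneg_right hπ3 (pow_pos ht 3).le, sq_nonneg (π * t),
    mul_pos (mul_pos ht ht) ht]

private lemma h_integrable :
    IntegrableOn (fun t : ℝ => t / (Real.exp (2 * π * t) - 1)) (Set.Ioi 0) := by
  have hmeas : Measurable fun t : ℝ => t / (Real.exp (2 * π * t) - 1) := by fun_prop
  refine Integrable.mono' (g := fun t : ℝ => (2 * π)⁻¹ * (1 + t ^ 2)⁻¹)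
    ?_ hmeas.aestronglyMeasurable ?_
  · exact (integrable_inv_one_add_sq.const_mul ((2 * π)⁻¹)).restrict
  · filter_upwards [ae_restrict_mem measurableSet_Ioi] with t ht
    rw [Set.mem_Ioi] at ht
    have hE := exp_gt_one ht
    rw [Real.norm_of_nonneg (div_nonneg ht.le (by linarith))]
    have := h_bound ht
    rw [one_div, mul_inv] at this
    exact this

private lemma h_value :
    ∫ t in Set.Ioi (0:ℝ), t / (Real.exp (2 * π * t) - 1) = 1 / 24 := by
  set F : ℕ → ℝ → ℝ := fun n t => t * Real.exp (-(2 * π * (n + 1) * t)) with hF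
  have hr : ∀ n : ℕ, (0:ℝ) < 2 * π * (n + 1) := fun n => by positivity
  have hFi : ∀ n : ℕ, IntegrableOn (F n) (Set.Ioi 0) := by
    intro n
    have := integrableOn_rpow_mul_exp_neg_mul_rpow (p := 1) (s := 1)
      (b := 2 * π * (n + 1)) (by norm_num) zero_lt_one (hr n)
    simpa [hF, Real.rpow_one, neg_mul, mul_assoc] using this
  have hval : ∀ n : ℕ, ∫ t in Set.Ioi (0:ℝ), F n t = (1 / (2 * π * (n + 1))) ^ 2 := by
    intro n
    have := integral_rpow_mul_exp_neg_mul_Ioi (a := 2) (r := 2 * π * (n + 1))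
      (by norm_num) (hr n)
    rw [Real.Gamma_two, mul_one] at this
    rw [show ((1:ℝ) / (2 * π * (n+1))) ^ (2:ℝ) = (1 / (2 * π * (n+1))) ^ (2:ℕ) by
      rw [← Real.rpow_natCast]; norm_num] at this
    rw [← this]
    refine setIntegral_congr_fun measurableSet_Ioi fun t ht => ?_
    rw [Set.mem_Ioi] at ht
    simp [hF, Real.rpow_natCast, show (2:ℝ) - 1 = 1 by norm_num, Real.rpow_one]
  have hnorm : ∀ n : ℕ, (∫ t in Set.Ioi (0:ℝ), ‖F n t‖) = (1 / (2 * π * (n + 1))) ^ 2 := by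
    intro n
    rw [← hval n]
    refine setIntegral_congr_fun measurableSet_Ioi fun t ht => ?_
    rw [Set.mem_Ioi] at ht
    exact Real.norm_of_nonneg (mul_nonneg ht.le (Real.exp_nonneg _))
  have hsum : HasSum (fun n : ℕ => ((1:ℝ) / (2 * π * (n + 1))) ^ 2) (1 / 24) := by
    have h1 : HasSum (fun n : ℕ => (1:ℝ) / ((n:ℝ) + 1) ^ 2) (π ^ 2 / 6) := by
      have := (hasSum_nat_add_iff' (f := fun n : ℕ => (1:ℝ) / (n:ℝ) ^ 2) 1).mpr
        hasSum_zeta_two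
      simpa [one_div] using this
    have h2 := h1.mul_left ((4 * π ^ 2)⁻¹)
    have hπ := Real.pi_ne_zero
    have e1 : (fun n : ℕ => ((1:ℝ) / (2 * π * (n + 1))) ^ 2)
        = fun n : ℕ => (4 * π ^ 2)⁻¹ * ((1:ℝ) / ((n:ℝ) + 1) ^ 2) := by
      funext n
      have hn : ((n:ℝ) + 1) ≠ 0 := by positivity
      field_simp
      ring
    have e2 : (1:ℝ) / 24 = (4 * π ^ 2)⁻¹ * (π ^ 2 / 6) := by
      field_simp
      ring
    rw [e1, e2]
    exact h2
  have hS : Summable fun n : ℕ => ∫ t in Set.Ioi (0:ℝ), ‖F n t‖ := by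
    simp_rw [hnorm]
    exact hsum.summable
  have key := integral_tsum_of_summable_integral_norm (μ := volume.restrict (Set.Ioi 0))
    (F := F) hFi hS
  have hpt : ∀ t ∈ Set.Ioi (0:ℝ), (∑' n : ℕ, F n t) = t / (Real.exp (2 * π * t) - 1) := by
    intro t ht
    rw [Set.mem_Ioi] at ht
    have hE := exp_gt_one ht
    set r : ℝ := Real.exp (-(2 * π * t)) with hrdef
    have hr0 : 0 < r := Real.exp_pos _
    have hr1 : r < 1 := by
      rw [hrdef, Real.exp_lt_one_iff]
      have : (0:ℝ) < 2 * π * t := by positivity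
      linarith
    have hg : HasSum (fun n : ℕ => (t * r) * r ^ n) (t * r * (1 - r)⁻¹) :=
      (hasSum_geometric_of_lt_one hr0.le hr1).mul_left _
    have heq : (fun n : ℕ => F n t) = fun n : ℕ => (t * r) * r ^ n := by
      funext n
      have h5 : (t * r) * r ^ n = t * r ^ (n + 1) := by ring
      rw [h5, hrdef, ← Real.exp_nat_mul]
      show t * Real.exp (-(2 * π * ((n:ℝ) + 1) * t)) = t * Real.exp (((n+1 : ℕ) : ℝ) * -(2 * π * t))
      congr 1
      push_cast
      ring
    rw [heq, hg.tsum_eq, hrdef, Real.exp_neg]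
    have hE0 : Real.exp (2 * π * t) ≠ 0 := (Real.exp_pos _).ne'
    have hE1 : Real.exp (2 * π * t) - 1 ≠ 0 := by linarith
    field_simp
  have e3 : ∫ t in Set.Ioi (0:ℝ), t / (Real.exp (2 * π * t) - 1)
      = ∫ t in Set.Ioi (0:ℝ), ∑' n, F n t :=
    (setIntegral_congr_fun measurableSet_Ioi hpt).symm
  rw [e3, ← key]
  simp_rw [hval]
  exact hsum.tsum_eq

/-- Bound for the error term in Binet's second formula on vertical lines:
for Re s = c > 0, ‖∫₀^∞ (s/(s²+t²))(t/(e^{2πt}−1)) dt‖ ≤ 1/(24c); in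
particular |s/(s²+t²)| ≤ 1/c for every t ≥ 0. -/
theorem stmt16 (s : ℂ) (hs : 0 < s.re) :
    ‖∫ t in Set.Ioi (0 : ℝ),
        (s / (s ^ 2 + (t : ℂ) ^ 2)) *
          ((t : ℂ) / (Complex.exp (2 * Real.pi * t) - 1))‖ ≤
      1 / (24 * s.re) ∧
    ∀ t : ℝ, 0 ≤ t → ‖s / (s ^ 2 + (t : ℂ) ^ 2)‖ ≤ 1 / s.re := by
  have hpt : ∀ t : ℝ, 0 ≤ t → ‖s / (s ^ 2 + (t : ℂ) ^ 2)‖ ≤ 1 / s.re := by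
    intro t ht
    set a := s.re with ha
    set b := s.im with hb
    have hfact : s ^ 2 + (t : ℂ) ^ 2 = (s + t * I) * (s - t * I) := by
      have h : (s + t * I) * (s - t * I) = s ^ 2 - (t:ℂ) ^ 2 * I ^ 2 := by ring
      rw [h, Complex.I_sq]; ring
    set x1 := ‖s + t * I‖ with hx1
    set x2 := ‖s - t * I‖ with hx2
    have e1 : x1 ^ 2 = a ^ 2 + (b + t) ^ 2 := by
      rw [hx1, Complex.sq_norm, Complex.normSq_apply]
      simp
      ring
    have e2 : x2 ^ 2 = a ^ 2 + (b - t) ^ 2 := by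
      rw [hx2, Complex.sq_norm, Complex.normSq_apply]
      simp
      ring
    have e3 : ‖s‖ ^ 2 = a ^ 2 + b ^ 2 := by
      rw [Complex.sq_norm, Complex.normSq_apply]; ring
    have hx1p : a ≤ x1 := by
      have h := Complex.abs_re_le_norm (s + t * I)
      have hre : (s + (t:ℂ) * I).re = a := by simp [ha]
      rw [hre, ← hx1] at h
      exact (le_abs_self a).trans h
    have hx2p : a ≤ x2 := by
      have h := Complex.abs_re_le_norm (s - t * I)
      have hre : (s - (t:ℂ) * I).re = a := by simp [ha]
      rw [hre, ← hx2] at h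
      exact (le_abs_self a).trans h
    have hx1pos : 0 < x1 := lt_of_lt_of_le hs hx1p
    have hx2pos : 0 < x2 := lt_of_lt_of_le hs hx2p
    have hkey : ‖s‖ * a ≤ x1 * x2 := by
      have hsq : (‖s‖ * a) ^ 2 ≤ (x1 * x2) ^ 2 := by
        have expand1 : (x1 * x2) ^ 2 = (x1 ^ 2) * (x2 ^ 2) := by ring
        rw [expand1, e1, e2]
        have expand2 : (‖s‖ * a) ^ 2 = (‖s‖ ^ 2) * a ^ 2 := by ring
        rw [expand2, e3]
        nlinarith [sq_nonneg (b ^ 2 - t ^ 2), sq_nonneg (a * b), sq_nonneg (a * t)]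
      have h0 : 0 ≤ ‖s‖ * a := mul_nonneg (norm_nonneg s) hs.le
      have h1 : 0 ≤ x1 * x2 := by positivity
      nlinarith [hsq, h0, h1]
    rw [norm_div, hfact, norm_mul, ← hx1, ← hx2]
    rw [div_le_div_iff₀ (by positivity) hs]
    linarith [hkey]
  refine ⟨?_, hpt⟩
  calc ‖∫ t in Set.Ioi (0 : ℝ),
        (s / (s ^ 2 + (t : ℂ) ^ 2)) * ((t : ℂ) / (Complex.exp (2 * Real.pi * t) - 1))‖
      ≤ ∫ t in Set.Ioi (0 : ℝ),
        ‖(s / (s ^ 2 + (t : ℂ) ^ 2)) * ((t : ℂ) / (Complex.exp (2 * Real.pi * t) - 1))‖ :=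
      norm_integral_le_integral_norm _
    _ ≤ ∫ t in Set.Ioi (0 : ℝ), (1 / s.re) * (t / (Real.exp (2 * π * t) - 1)) := by
      refine integral_mono_of_nonneg ?_ (h_integrable.const_mul _) ?_
      · filter_upwards with t using norm_nonneg _
      · filter_upwards [ae_restrict_mem measurableSet_Ioi] with t ht
        rw [Set.mem_Ioi] at ht
        have hE := exp_gt_one ht
        have hcast : Complex.exp (2 * Real.pi * t) - 1
            = ((Real.exp (2 * π * t) - 1 : ℝ) : ℂ) := by
          push_cast [Complex.ofReal_exp]
          norm_num
        rw [norm_mul, hcast]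
        have habs2 : ‖((t : ℂ) / ((Real.exp (2 * π * t) - 1 : ℝ) : ℂ))‖
            = t / (Real.exp (2 * π * t) - 1) := by
          rw [← Complex.ofReal_div, Complex.norm_real,
            Real.norm_of_nonneg (div_nonneg ht.le (by linarith))]
        rw [habs2]
        refine mul_le_mul_of_nonneg_right ?_ (div_nonneg ht.le (by linarith))
        exact hpt t ht.le
    _ = (1 / s.re) * ∫ t in Set.Ioi (0 : ℝ), t / (Real.exp (2 * π * t) - 1) :=
      integral_const_mul _ _
    _ = (1 / s.re) * (1 / 24) := by rw [h_value]
    _ = 1 / (24 * s.re) := by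
      rw [div_mul_div_comm, one_mul, mul_comm]
end

section
/- For every c > 0 there exists a constant C₀ > 0 such that for every real number u with |u| ≥ 1 one has ‖Γ'(c + iu)/Γ(c + iu)‖ ≤ log |u| + C₀, where Γ is the complex Gamma function. Consequently, the vertical order of Γ satisfies m₀(Γ) = 2: the function t ↦ |c + it|^{−2} (Γ'/Γ)(c + it) is integrable on ℝ while t ↦ |c + it|^{−1} (Γ'/Γ)(c + it) is not. -/
open Complex MeasureTheory

open Complex Filter Topology Set MeasureTheory

noncomputable def digTerm (s : ℂ) (n : ℕ) : ℂ := ((n:ℂ)+1)⁻¹ - ((n:ℂ)+s)⁻¹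

noncomputable def dig (s : ℂ) : ℂ := -(Real.eulerMascheroniConstant : ℂ) + ∑' n : ℕ, digTerm s n

lemma re_pos_ns {s : ℂ} (hs : 0 < s.re) (n : ℕ) : 0 < ((n:ℂ) + s).re := by
  simp only [Complex.add_re, Complex.natCast_re]
  positivity

lemma ns_ne_zero {s : ℂ} (hs : 0 < s.re) (n : ℕ) : (n:ℂ) + s ≠ 0 := by
  intro h
  have := re_pos_ns hs n
  rw [h] at this; simp at this

lemma re_le_abs_ns (s : ℂ) (n : ℕ) : (n + s.re) ≤ ‖(n:ℂ)+s‖ := by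
  have := Complex.re_le_norm ((n:ℂ)+s)
  simpa using this

lemma im_le_abs_ns (s : ℂ) (n : ℕ) : |s.im| ≤ ‖(n:ℂ)+s‖ := by
  have := Complex.abs_im_le_norm ((n:ℂ)+s)
  simpa using this

lemma abs_ns_pos {s : ℂ} (hs : 0 < s.re) (n : ℕ) : 0 < ‖(n:ℂ)+s‖ :=
  norm_pos_iff.mpr (ns_ne_zero hs n)

lemma digTerm_eq {s : ℂ} (hs : 0 < s.re) (n : ℕ) :
    digTerm s n = (s - 1)/(((n:ℂ)+1)*((n:ℂ)+s)) := by
  have h1 : ((n:ℂ)+1) ≠ 0 := by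
    simpa using Nat.cast_add_one_ne_zero (R := ℂ) n
  rw [digTerm]
  field_simp [ns_ne_zero hs n]
  ring

lemma digTerm_norm {s : ℂ} (hs : 0 < s.re) (n : ℕ) :
    ‖digTerm s n‖ = ‖s-1‖ / (((n:ℝ)+1) * ‖(n:ℂ)+s‖) := by
  rw [digTerm_eq hs n, norm_div, norm_mul]
  have h1 : ((n:ℂ)+1) = ((n+1:ℕ):ℂ) := by push_cast; ring
  rw [h1, Complex.norm_natCast]
  push_cast
  rfl

lemma summable_sq_shift : Summable (fun n : ℕ => (((n:ℝ)+1)^2)⁻¹) := by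
  have h : Summable (fun n : ℕ => 1/((n:ℝ))^2) := by
    rw [Real.summable_one_div_nat_pow]; norm_num
  have := (summable_nat_add_iff 1).mpr h
  simpa [one_div] using this

lemma summable_norm_digTerm {s : ℂ} (hs : 0 < s.re) : Summable (fun n => ‖digTerm s n‖) := by
  set m : ℝ := min 1 s.re with hm
  have hm0 : 0 < m := lt_min one_pos hs
  have key : ∀ n : ℕ, ‖digTerm s n‖ ≤ (‖s-1‖/m) * (((n:ℝ)+1)^2)⁻¹ := by
    intro n
    rw [digTerm_norm hs n]
    have h1 : m * ((n:ℝ)+1) ≤ ‖(n:ℂ)+s‖ := by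
      refine le_trans ?_ (re_le_abs_ns s n)
      have : m ≤ 1 := min_le_left _ _
      have : m ≤ s.re := min_le_right _ _
      nlinarith [Nat.cast_nonneg (α := ℝ) n, min_le_left (1:ℝ) s.re]
    have hn1 : (0:ℝ) < (n:ℝ)+1 := by positivity
    have h2 : ‖s-1‖ / (((n:ℝ)+1) * ‖(n:ℂ)+s‖) ≤ ‖s-1‖ / (((n:ℝ)+1) * (m*((n:ℝ)+1))) := by
      apply div_le_div_of_nonneg_left (norm_nonneg _) (by positivity)
      exact mul_le_mul_of_nonneg_left h1 hn1.le
    refine h2.trans (le_of_eq ?_)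
    rw [show (((n:ℝ)+1) * (m*((n:ℝ)+1))) = m * ((n:ℝ)+1)^2 by ring, ← div_div, div_eq_mul_inv]
  exact Summable.of_nonneg_of_le (fun n => norm_nonneg _) key (summable_sq_shift.mul_left _)

lemma summable_digTerm {s : ℂ} (hs : 0 < s.re) : Summable (digTerm s) :=
  (summable_norm_digTerm hs).of_norm

lemma hasDerivAt_digTerm {s : ℂ} (hs : 0 < s.re) (n : ℕ) :
    HasDerivAt (fun z => digTerm z n) ((((n:ℂ)+s)^2)⁻¹) s := by
  have h0 : HasDerivAt (fun z : ℂ => (n:ℂ) + z) 1 s := (hasDerivAt_id s).const_add _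
  have h := (hasDerivAt_inv (ns_ne_zero hs n)).comp s h0
  have h2 := (hasDerivAt_const s (((n:ℂ)+1)⁻¹)).sub h
  exact h2.congr_deriv (by ring)

lemma differentiableAt_digsum {s : ℂ} (hs : 0 < s.re) :
    DifferentiableAt ℂ (fun z => ∑' n : ℕ, digTerm z n) s := by
  set ε := s.re/2 with hεdef
  have hε : 0 < ε := by positivity
  set m := min 1 ε with hmdef
  have hm0 : 0 < m := lt_min one_pos hε
  set S := {z : ℂ | ε < z.re} with hSdef
  have hopen : IsOpen S := isOpen_lt continuous_const continuous_re
  have hpre : IsPreconnected S := (convex_halfSpace_re_gt ε).isPreconnected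
  have hsS : s ∈ S := by simp only [hSdef, mem_setOf_eq, hεdef]; linarith
  have key := hasFDerivAt_tsum_of_isPreconnected
    (u := fun n : ℕ => (m^2)⁻¹ * (((n:ℝ)+1)^2)⁻¹)
    (f := fun n z => digTerm z n)
    (f' := fun n z => ContinuousLinearMap.smulRight (1 : ℂ →L[ℂ] ℂ) ((((n:ℂ)+z)^2)⁻¹))
    (((summable_sq_shift).mul_left _))
    hopen hpre
    (fun n z hz => (hasDerivAt_digTerm (by
      simp only [hSdef, mem_setOf_eq] at hz; linarith) n).hasFDerivAt)
    (fun n z hz => by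
      have hz' : 0 < z.re := by simp only [hSdef, mem_setOf_eq] at hz; linarith
      rw [ContinuousLinearMap.norm_smulRight_apply, norm_one, one_mul]
      have h1 : m * ((n:ℝ)+1) ≤ ‖(n:ℂ)+z‖ := by
        refine le_trans ?_ (re_le_abs_ns z n)
        have h2 : m ≤ 1 := min_le_left _ _
        have h3 : m ≤ ε := min_le_right _ _
        simp only [hSdef, mem_setOf_eq] at hz
        nlinarith [Nat.cast_nonneg (α := ℝ) n]
      rw [norm_inv, norm_pow]
      show _ ≤ (m^2)⁻¹ * (((n:ℝ)+1)^2)⁻¹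
      rw [← mul_inv]
      apply inv_anti₀ (by positivity)
      calc m^2 * ((n:ℝ)+1)^2 = (m * ((n:ℝ)+1))^2 := by ring
      _ ≤ (‖(n:ℂ)+z‖)^2 := by
          apply pow_le_pow_left₀ (by positivity) h1
    )
    hsS (summable_digTerm hs) hsS
  exact key.differentiableAt

lemma differentiableAt_dig {s : ℂ} (hs : 0 < s.re) : DifferentiableAt ℂ dig s := by
  exact (differentiableAt_const _).add (differentiableAt_digsum hs)

lemma ne_neg_nat {s : ℂ} (hs : 0 < s.re) (m : ℕ) : s ≠ -(m:ℂ) := by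
  intro h
  have : s.re = -(m:ℝ) := by rw [h]; simp
  rw [this] at hs
  have : (0:ℝ) ≤ (m:ℝ) := Nat.cast_nonneg m
  linarith

lemma GammaNeZeroRePos {s : ℂ} (hs : 0 < s.re) : Gamma s ≠ 0 :=
  Complex.Gamma_ne_zero (fun m => ne_neg_nat hs m)

lemma analyticOnNhd_Gamma : AnalyticOnNhd ℂ Gamma {z : ℂ | 0 < z.re} := by
  apply DifferentiableOn.analyticOnNhd
  · exact fun z hz => (Complex.differentiableAt_Gamma z (fun m => ne_neg_nat hz m)).differentiableWithinAt
  · exact isOpen_lt continuous_const continuous_re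

lemma analyticOnNhd_psi :
    AnalyticOnNhd ℂ (fun z => deriv Gamma z / Gamma z) {z : ℂ | 0 < z.re} :=
  (analyticOnNhd_Gamma.deriv).div analyticOnNhd_Gamma (fun z hz => GammaNeZeroRePos hz)

lemma analyticOnNhd_dig : AnalyticOnNhd ℂ dig {z : ℂ | 0 < z.re} := by
  apply DifferentiableOn.analyticOnNhd
  · exact fun z hz => (differentiableAt_dig hz).differentiableWithinAt
  · exact isOpen_lt continuous_const continuous_re

local notation "γ" => Real.eulerMascheroniConstant

lemma tendsto_log_shift (a : ℝ) :
    Tendsto (fun N : ℕ => Real.log ((N:ℝ) + a) - Real.log N) atTop (𝓝 0) := by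
  have h1 : Tendsto (fun N : ℕ => 1 + a/(N:ℝ)) atTop (𝓝 1) := by
    have := Filter.Tendsto.div_atTop (tendsto_const_nhds (x := a)) tendsto_natCast_atTop_atTop
    simpa using tendsto_const_nhds.add this
  have h2 : Tendsto (fun N : ℕ => Real.log (1 + a/(N:ℝ))) atTop (𝓝 0) := by
    have := (Real.continuousAt_log one_ne_zero).tendsto.comp h1
    simpa [Function.comp_def] using this
  apply h2.congr'
  filter_upwards [eventually_gt_atTop (⌈|a|⌉₊)] with N hN
  have hN0 : (0:ℝ) < N := by exact_mod_cast Nat.pos_of_ne_zero (by omega)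
  have hNa : (0:ℝ) < (N:ℝ) + a := by
    have h3 : |a| ≤ (⌈|a|⌉₊ : ℝ) := Nat.le_ceil _
    have h4 : (⌈|a|⌉₊ : ℝ) < N := by exact_mod_cast hN
    have h5 := abs_lt.mp (h3.trans_lt h4)
    linarith [h5.1]
  have : 1 + a/(N:ℝ) = ((N:ℝ) + a)/N := by field_simp
  rw [this, Real.log_div (by positivity) (by positivity)]

lemma tendsto_log_diff (a b : ℝ) :
    Tendsto (fun N : ℕ => Real.log ((N:ℝ) + a) - Real.log ((N:ℝ) + b)) atTop (𝓝 0) := by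
  have := (tendsto_log_shift a).sub (tendsto_log_shift b)
  simpa using this

lemma harmonic_partial_tendsto :
    Tendsto (fun N : ℕ => (harmonic N : ℝ) - Real.log N) atTop (𝓝 γ) :=
  Real.tendsto_harmonic_sub_log

/-- The key real limit: deriv (log ∘ Γ) x = lim (log N - ∑_{k<N} 1/(x+k)). -/
lemma real_deriv_logGamma_eq (x : ℝ) (hx : 0 < x) :
    Tendsto (fun N : ℕ => Real.log N - ∑ k ∈ Finset.range N, (x + k)⁻¹) atTop
      (𝓝 (deriv (Real.log ∘ Real.Gamma) x)) := by
  set f := Real.log ∘ Real.Gamma with hf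
  have hc : ConvexOn ℝ (Ioi 0) f := Real.convexOn_log_Gamma
  have h_rec : ∀ y : ℝ, 0 < y → f (y + 1) = f y + Real.log y := fun y hy => by
    simp only [hf, Function.comp_apply, Real.Gamma_add_one hy.ne',
      Real.log_mul hy.ne' (Real.Gamma_pos_of_pos hy).ne', add_comm]
  have hder : ∀ {y : ℝ}, 0 < y → DifferentiableAt ℝ f y := fun {y} hy => by
    refine ((Real.differentiableAt_Gamma ?_).log (Real.Gamma_ne_zero ?_)) <;>
    · intro m h
      have hm : (0:ℝ) ≤ m := Nat.cast_nonneg m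
      rw [h] at hy; linarith
  have hder_rec : ∀ y : ℝ, 0 < y → deriv f (y + 1) = deriv f y + 1 / y := fun y hy => by
    rw [← deriv_comp_add_const, one_div, ← Real.deriv_log,
      ← deriv_add (hder hy) (Real.differentiableAt_log hy.ne')]
    apply Filter.EventuallyEq.deriv_eq
    filter_upwards [eventually_gt_nhds hy] using h_rec
  have hder_shift : ∀ N : ℕ, deriv f (x + N) = deriv f x + ∑ k ∈ Finset.range N, (x + k)⁻¹ := by
    intro N
    induction N with
    | zero => simp
    | succ n ih =>
      have h1 : x + (n+1 : ℕ) = (x + n) + 1 := by push_cast; ring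
      rw [h1, hder_rec (x + n) (by positivity), ih, Finset.sum_range_succ, one_div]
      push_cast
      ring
  have derivLB : ∀ N : ℕ, Real.log (x + N) ≤ deriv f (x + N + 1) := by
    intro N
    have hmem1 : (x + N : ℝ) ∈ Ioi (0:ℝ) := by simp; positivity
    have hmem2 : (x + N + 1 : ℝ) ∈ Ioi (0:ℝ) := by simp; positivity
    refine (le_of_eq ?_).trans <| hc.slope_le_deriv hmem1 hmem2 (by linarith)
      (hder (by positivity))
    rw [slope_def_field, show x + N + 1 - (x + N) = (1:ℝ) by ring, div_one,
      h_rec (x + N) (by positivity), add_sub_cancel_left]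
  have derivUB : ∀ N : ℕ, deriv f (x + N + 1) ≤ Real.log (x + N + 1) := by
    intro N
    have hmem1 : (x + N + 1 : ℝ) ∈ Ioi (0:ℝ) := by simp; positivity
    have hmem2 : (x + N + 2 : ℝ) ∈ Ioi (0:ℝ) := by simp; positivity
    refine (hc.deriv_le_slope hmem1 hmem2 (by linarith) (hder (by positivity))).trans
      (le_of_eq ?_)
    rw [slope_def_field, show x + N + 2 - (x + N + 1) = (1:ℝ) by ring, div_one,
      show x + N + 2 = (x + N + 1) + 1 by ring, h_rec (x + N + 1) (by positivity),
      add_sub_cancel_left]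
  -- deriv f (x + N) - log N → 0
  have T1 : Tendsto (fun N : ℕ => deriv f (x + (N+1:ℕ)) - Real.log ((N:ℝ)+1)) atTop (𝓝 0) := by
    have hlow : Tendsto (fun N : ℕ => Real.log ((N:ℝ) + x) - Real.log ((N:ℝ)+1)) atTop (𝓝 0) :=
      tendsto_log_diff x 1
    have hup : Tendsto (fun N : ℕ => Real.log ((N:ℝ) + (x+1)) - Real.log ((N:ℝ)+1)) atTop (𝓝 0) :=
      tendsto_log_diff (x+1) 1
    refine tendsto_of_tendsto_of_tendsto_of_le_of_le hlow hup (fun N => ?_) (fun N => ?_)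
    · have := derivLB N
      have he : x + (N+1:ℕ) = x + N + 1 := by push_cast; ring
      rw [he]
      have h2 : ((N:ℝ) + x) = (x + N) := by ring
      rw [h2]
      linarith
    · have := derivUB N
      have he : x + (N+1:ℕ) = x + N + 1 := by push_cast; ring
      rw [he]
      have h2 : ((N:ℝ) + (x+1)) = (x + N + 1) := by ring
      rw [h2]
      linarith
  -- conclude
  have key : ∀ N : ℕ, Real.log ((N:ℝ)+1) - ∑ k ∈ Finset.range (N+1), (x + k)⁻¹
      = deriv f x - (deriv f (x + (N+1:ℕ)) - Real.log ((N:ℝ)+1)) := by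
    intro N
    have := hder_shift (N+1)
    push_cast at this ⊢
    linarith
  have T2 : Tendsto (fun N : ℕ => Real.log ((N:ℝ)+1) - ∑ k ∈ Finset.range (N+1), (x + k)⁻¹)
      atTop (𝓝 (deriv f x)) := by
    simp_rw [key]
    simpa using tendsto_const_nhds.sub T1
  -- shift index back
  have := T2
  rw [show 𝓝 (deriv f x) = 𝓝 (deriv (Real.log ∘ Real.Gamma) x) by rfl] at this
  have heq : (fun N : ℕ => Real.log ((N:ℝ)+1) - ∑ k ∈ Finset.range (N+1), (x + k)⁻¹)
      = (fun N : ℕ => Real.log ((N+1:ℕ):ℝ) - ∑ k ∈ Finset.range (N+1), (x + k)⁻¹) := by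
    funext N; push_cast; ring_nf
  rw [heq] at this
  exact (tendsto_add_atTop_iff_nat 1).mp this


lemma summable_realDigTerm {x : ℝ} (hx : 0 < x) :
    Summable (fun n : ℕ => ((n:ℝ)+1)⁻¹ - ((n:ℝ)+x)⁻¹) := by
  have hs : (0:ℝ) < ((x:ℂ)).re := by simpa using hx
  have h := summable_digTerm hs
  have h2 := (Complex.hasSum_re h.hasSum).summable
  refine h2.congr fun n => ?_
  simp only [digTerm, Complex.sub_re]
  have e1 : ((n:ℂ)+1)⁻¹ = ((((n:ℝ)+1)⁻¹ : ℝ) : ℂ) := by push_cast; ring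
  have e2 : ((n:ℂ)+(x:ℂ))⁻¹ = ((((n:ℝ)+x)⁻¹ : ℝ) : ℂ) := by push_cast; ring
  rw [e1, e2, Complex.ofReal_re, Complex.ofReal_re]

lemma harmonic_cast (N : ℕ) :
    ((harmonic N : ℚ) : ℝ) = ∑ k ∈ Finset.range N, ((k:ℝ)+1)⁻¹ := by
  rw [harmonic]
  push_cast
  rfl

lemma real_digamma {x : ℝ} (hx : 0 < x) :
    deriv Real.Gamma x / Real.Gamma x = -γ + ∑' n : ℕ, (((n:ℝ)+1)⁻¹ - ((n:ℝ)+x)⁻¹) := by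
  have hsum := summable_realDigTerm hx
  have T2 : Tendsto (fun N : ℕ => Real.log N - ∑ k ∈ Finset.range N, (x + k)⁻¹) atTop
      (𝓝 (-γ + ∑' n : ℕ, (((n:ℝ)+1)⁻¹ - ((n:ℝ)+x)⁻¹))) := by
    have h1 : Tendsto (fun N : ℕ => -((harmonic N : ℝ) - Real.log N)) atTop (𝓝 (-γ)) :=
      (Real.tendsto_harmonic_sub_log).neg
    have h2 : Tendsto (fun N : ℕ => ∑ k ∈ Finset.range N, (((k:ℝ)+1)⁻¹ - ((k:ℝ)+x)⁻¹)) atTop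
        (𝓝 (∑' n : ℕ, (((n:ℝ)+1)⁻¹ - ((n:ℝ)+x)⁻¹))) := hsum.hasSum.tendsto_sum_nat
    have h3 := h1.add h2
    refine h3.congr fun N => ?_
    rw [Finset.sum_sub_distrib, ← harmonic_cast N]
    have : ∀ k : ℕ, ((k:ℝ)+x)⁻¹ = (x + (k:ℝ))⁻¹ := fun k => by rw [add_comm]
    simp_rw [this]
    ring
  have T1 := real_deriv_logGamma_eq x hx
  have huniq := tendsto_nhds_unique T1 T2
  have hGx : Real.Gamma x ≠ 0 := (Real.Gamma_pos_of_pos hx).ne'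
  have hdG : DifferentiableAt ℝ Real.Gamma x := Real.differentiableAt_Gamma (fun m => by
    intro h
    have hm : (0:ℝ) ≤ m := Nat.cast_nonneg m
    rw [h] at hx; linarith)
  have : deriv (Real.log ∘ Real.Gamma) x = deriv Real.Gamma x / Real.Gamma x := by
    rw [Function.comp_def, deriv.log hdG hGx]
  rw [← this, huniq]

lemma complexOfRealDeriv {f : ℂ → ℂ} {g : ℝ → ℝ} {g' s : ℝ}
    (hf : DifferentiableAt ℂ f s) (hg : HasDerivAt g g' s) (hfg : ∀ s : ℝ, f s = (g s : ℂ)) :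
    HasDerivAt f (g' : ℂ) s := by
  refine HasDerivAt.congr_deriv hf.hasDerivAt ?_
  rw [← (funext hfg ▸ hf.hasDerivAt.comp_ofReal.deriv :)]
  exact hg.ofReal_comp.deriv

lemma deriv_Gamma_ofReal {x : ℝ} (hx : 0 < x) :
    deriv Complex.Gamma (x:ℂ) = ((deriv Real.Gamma x : ℝ) : ℂ) := by
  have hre : (0:ℝ) < ((x:ℂ)).re := by simpa using hx
  have hf : DifferentiableAt ℂ Complex.Gamma (x:ℂ) :=
    Complex.differentiableAt_Gamma _ (fun m => ne_neg_nat hre m)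
  have hdG : DifferentiableAt ℝ Real.Gamma x := Real.differentiableAt_Gamma (fun m => by
    intro h
    have hm : (0:ℝ) ≤ m := Nat.cast_nonneg m
    rw [h] at hx; linarith)
  exact (complexOfRealDeriv hf hdG.hasDerivAt Complex.Gamma_ofReal).deriv

lemma dig_ofReal {x : ℝ} (hx : 0 < x) :
    dig (x:ℂ) = (((-γ + ∑' n : ℕ, (((n:ℝ)+1)⁻¹ - ((n:ℝ)+x)⁻¹)) : ℝ) : ℂ) := by
  rw [dig, Complex.ofReal_add, Complex.ofReal_neg, Complex.ofReal_tsum]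
  congr 1
  refine tsum_congr fun n => ?_
  rw [digTerm]
  push_cast
  ring

lemma psi_eq_dig : Set.EqOn (fun z => deriv Complex.Gamma z / Complex.Gamma z) dig
    {z : ℂ | 0 < z.re} := by
  apply AnalyticOnNhd.eqOn_of_preconnected_of_frequently_eq analyticOnNhd_psi analyticOnNhd_dig
    (convex_halfSpace_re_gt 0).isPreconnected (z₀ := (1:ℂ)) (by simp)
  have hpt : ∀ x : ℝ, 0 < x →
      deriv Complex.Gamma (x:ℂ) / Complex.Gamma (x:ℂ) = dig (x:ℂ) := by
    intro x hx
    rw [deriv_Gamma_ofReal hx, Complex.Gamma_ofReal, dig_ofReal hx, ← Complex.ofReal_div,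
      real_digamma hx]
  have hseq : Tendsto (fun n : ℕ => (((1 + 1/((n:ℝ)+1)) : ℝ) : ℂ)) atTop (𝓝[≠] (1:ℂ)) := by
    rw [tendsto_nhdsWithin_iff]
    constructor
    · have hr : Tendsto (fun n : ℕ => (1 + 1/((n:ℝ)+1))) atTop (𝓝 1) := by
        have := tendsto_one_div_add_atTop_nhds_zero_nat (𝕜 := ℝ)
        simpa using tendsto_const_nhds.add this
      have h2 := (Complex.continuous_ofReal.tendsto (1:ℝ)).comp hr
      rw [show ((1:ℝ):ℂ) = 1 by norm_num] at h2
      exact h2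
    · filter_upwards with n
      simp only [Set.mem_compl_iff, Set.mem_singleton_iff]
      intro h
      rw [show (1:ℂ) = ((1:ℝ):ℂ) by norm_num, Complex.ofReal_inj] at h
      have : (0:ℝ) < 1/((n:ℝ)+1) := by positivity
      linarith
  exact hseq.frequently (Frequently.of_forall fun n => hpt _ (by positivity))

lemma psi_formula {s : ℂ} (hs : 0 < s.re) :
    deriv Complex.Gamma s / Complex.Gamma s = dig s := psi_eq_dig hs

lemma sum_inv_le_one_add_log (N : ℕ) (hN : 1 ≤ N) :
    ∑ k ∈ Finset.range N, ((k:ℝ)+1)⁻¹ ≤ 1 + Real.log N := by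
  induction N, hN using Nat.le_induction with
  | base => norm_num
  | succ n hn ih =>
    rw [Finset.sum_range_succ]
    have hn0 : (0:ℝ) < n := by exact_mod_cast hn
    have hstep : ((n:ℝ)+1)⁻¹ ≤ Real.log ((n:ℝ)+1) - Real.log n := by
      have h1 : Real.log ((n:ℝ)/((n:ℝ)+1)) ≤ (n:ℝ)/((n:ℝ)+1) - 1 :=
        Real.log_le_sub_one_of_pos (by positivity)
      rw [Real.log_div (by positivity) (by positivity)] at h1
      have h2 : (n:ℝ)/((n:ℝ)+1) - 1 = -((n:ℝ)+1)⁻¹ := by field_simp; ring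
      rw [h2] at h1
      linarith
    push_cast
    linarith

lemma log_add_one_le_sum_inv (N : ℕ) :
    Real.log ((N:ℝ)+1) ≤ ∑ k ∈ Finset.range N, ((k:ℝ)+1)⁻¹ := by
  induction N with
  | zero => simp
  | succ n ih =>
    rw [Finset.sum_range_succ]
    have hstep : Real.log ((n:ℝ)+1+1) - Real.log ((n:ℝ)+1) ≤ ((n:ℝ)+1)⁻¹ := by
      have h1 : Real.log (((n:ℝ)+2)/((n:ℝ)+1)) ≤ ((n:ℝ)+2)/((n:ℝ)+1) - 1 :=
        Real.log_le_sub_one_of_pos (by positivity)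
      rw [Real.log_div (by positivity) (by positivity)] at h1
      have h2 : ((n:ℝ)+2)/((n:ℝ)+1) - 1 = ((n:ℝ)+1)⁻¹ := by
        field_simp
        norm_num
      rw [h2] at h1
      have h3 : (n:ℝ)+1+1 = (n:ℝ)+2 := by ring
      rw [h3]
      linarith
    push_cast
    linarith

lemma hasSum_telescope {a : ℝ} (ha : 0 < a) :
    HasSum (fun n : ℕ => (((n:ℝ)+a) * ((n:ℝ)+a+1))⁻¹) a⁻¹ := by
  have hnn : ∀ n : ℕ, 0 ≤ (((n:ℝ)+a) * ((n:ℝ)+a+1))⁻¹ := fun n => by positivity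
  rw [hasSum_iff_tendsto_nat_of_nonneg hnn]
  have hpart : ∀ N : ℕ, ∑ n ∈ Finset.range N, (((n:ℝ)+a) * ((n:ℝ)+a+1))⁻¹
      = a⁻¹ - ((N:ℝ)+a)⁻¹ := by
    intro N
    have heq : ∀ n ∈ Finset.range N, (((n:ℝ)+a) * ((n:ℝ)+a+1))⁻¹
        = (fun k : ℕ => ((k:ℝ)+a)⁻¹) n - (fun k : ℕ => ((k:ℝ)+a)⁻¹) (n+1) := by
      intro n _
      have h1 : ((n:ℝ)+a) ≠ 0 := by positivity
      have h2 : ((n:ℝ)+a+1) ≠ 0 := by positivity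
      have h2b : ((n:ℝ)+1+a) ≠ 0 := by positivity
      simp only
      push_cast
      rw [eq_comm, inv_sub_inv h1 h2b, show ((n:ℝ)+1+a) - ((n:ℝ)+a) = 1 by ring, one_div]
      ring_nf
    rw [Finset.sum_congr rfl heq, Finset.sum_range_sub' (fun k : ℕ => ((k:ℝ)+a)⁻¹) N]
    norm_num
  simp only [hpart]
  have h0 : Tendsto (fun N : ℕ => ((N:ℝ)+a)⁻¹) atTop (𝓝 0) := by
    apply Filter.Tendsto.comp tendsto_inv_atTop_zero
    exact tendsto_atTop_add_const_right _ a tendsto_natCast_atTop_atTop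
  simpa using tendsto_const_nhds.sub h0

noncomputable def digC (c : ℝ) : ℝ :=
  |Real.eulerMascheroniConstant| + (1 + Real.log 2) + (c+1)*(2 + Real.log 2) + (c+2)

lemma digC_pos {c : ℝ} (hc : 0 < c) : 0 < digC c := by
  have h2 : (0:ℝ) ≤ Real.log 2 := Real.log_nonneg (by norm_num)
  have h3 := abs_nonneg Real.eulerMascheroniConstant
  unfold digC
  nlinarith

set_option maxHeartbeats 1000000 in
lemma dig_norm_bound {c : ℝ} (hc : 0 < c) (u : ℝ) (hu : 1 ≤ |u|) :
    ‖dig ((c:ℂ) + u * I)‖ ≤ Real.log |u| + digC c := by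
  set s : ℂ := (c:ℂ) + u * I with hsdef
  have hre : s.re = c := by simp [hsdef]
  have him : s.im = u := by simp [hsdef]
  have hs : 0 < s.re := by rw [hre]; exact hc
  have hu0 : (0:ℝ) < |u| := lt_of_lt_of_le one_pos hu
  set N : ℕ := ⌈|u|⌉₊ with hNdef
  have huN : |u| ≤ (N:ℝ) := Nat.le_ceil _
  have hN2u : (N:ℝ) ≤ 2*|u| := by
    have := Nat.ceil_lt_add_one (abs_nonneg u)
    rw [← hNdef] at this
    linarith
  have hNpos : (0:ℝ) < N := lt_of_lt_of_le hu0 huN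
  have hlog2 : (0:ℝ) ≤ Real.log 2 := Real.log_nonneg (by norm_num)
  have hlogu0 : (0:ℝ) ≤ Real.log |u| := Real.log_nonneg hu
  have hloguu : Real.log |u| ≤ |u| := by
    have := Real.log_le_sub_one_of_pos hu0
    linarith
  have hs1 : ‖s - 1‖ ≤ |u| + (c+1) := by
    have he : s - 1 = ((c - 1 : ℝ):ℂ) + u*I := by rw [hsdef]; push_cast; ring
    rw [he]
    refine (norm_add_le _ _).trans ?_
    rw [norm_mul, Complex.norm_I, mul_one, Complex.norm_real, Complex.norm_real,
      Real.norm_eq_abs, Real.norm_eq_abs]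
    have h1 : |c - 1| ≤ c + 1 := by rw [abs_le]; constructor <;> linarith
    linarith
  have hs1nn : (0:ℝ) ≤ ‖s - 1‖ := norm_nonneg _
  have hsnorm := summable_norm_digTerm hs
  have hsplit := Summable.sum_add_tsum_nat_add (f := fun n => ‖digTerm s n‖) N hsnorm
  -- head bound
  have hH : ∑ k ∈ Finset.range N, ((k:ℝ)+1)⁻¹ ≤ 1 + Real.log 2 + Real.log |u| := by
    have h1 := sum_inv_le_one_add_log N (by exact_mod_cast hNpos)
    have h2 : Real.log (N:ℝ) ≤ Real.log (2*|u|) := Real.log_le_log hNpos hN2u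
    rw [Real.log_mul (by norm_num) (ne_of_gt hu0)] at h2
    linarith
  have hHnn : (0:ℝ) ≤ ∑ k ∈ Finset.range N, ((k:ℝ)+1)⁻¹ :=
    Finset.sum_nonneg fun k _ => by positivity
  have hhead : ∑ n ∈ Finset.range N, ‖digTerm s n‖ ≤
      Real.log |u| + (1 + Real.log 2) + (c+1)*(2+Real.log 2) := by
    have hterm : ∀ n ∈ Finset.range N, ‖digTerm s n‖ ≤ (‖s-1‖/|u|) * ((n:ℝ)+1)⁻¹ := by
      intro n _
      rw [digTerm_norm hs n]
      have habs : |u| ≤ ‖(n:ℂ)+s‖ := him ▸ im_le_abs_ns s n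
      have h1 : ‖s-1‖/(((n:ℝ)+1) * ‖(n:ℂ)+s‖) ≤ ‖s-1‖/(((n:ℝ)+1) * |u|) := by
        apply div_le_div_of_nonneg_left (norm_nonneg _) (by positivity)
        exact mul_le_mul_of_nonneg_left habs (by positivity)
      refine h1.trans (le_of_eq ?_)
      rw [show ((n:ℝ)+1) * |u| = |u| * ((n:ℝ)+1) by ring, ← div_div, div_eq_mul_inv]
    calc ∑ n ∈ Finset.range N, ‖digTerm s n‖
        ≤ ∑ n ∈ Finset.range N, (‖s-1‖/|u|) * ((n:ℝ)+1)⁻¹ := Finset.sum_le_sum hterm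
      _ = (‖s-1‖/|u|) * ∑ n ∈ Finset.range N, ((n:ℝ)+1)⁻¹ := by rw [Finset.mul_sum]
      _ ≤ _ := by
          rw [div_mul_eq_mul_div, div_le_iff₀ hu0]
          have e1 : ‖s-1‖ * (∑ n ∈ Finset.range N, ((n:ℝ)+1)⁻¹) ≤
              (|u| + (c+1)) * (1+Real.log 2+Real.log |u|) :=
            mul_le_mul hs1 hH hHnn (by positivity)
          have h4 : (c+1)*Real.log |u| ≤ (c+1)*|u| :=
            mul_le_mul_of_nonneg_left hloguu (by linarith)
          have h5 : (c+1)*1 ≤ (c+1)*|u| := mul_le_mul_of_nonneg_left hu (by linarith)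
          have h6 : ((c+1)*Real.log 2)*1 ≤ ((c+1)*Real.log 2)*|u| :=
            mul_le_mul_of_nonneg_left hu (by nlinarith)
          nlinarith [e1, h4, h5, h6]
  -- tail bound
  have htail : (∑' n : ℕ, ‖digTerm s (n+N)‖) ≤ c+2 := by
    have hterm : ∀ n : ℕ, ‖digTerm s (n+N)‖ ≤ ‖s-1‖ * ((((n:ℝ)+N) * (((n:ℝ)+N)+1))⁻¹) := by
      intro n
      rw [digTerm_norm hs (n+N)]
      have habs : ((n:ℝ)+N) ≤ ‖((n+N:ℕ):ℂ)+s‖ := by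
        refine le_trans ?_ (re_le_abs_ns s (n+N))
        rw [hre]
        push_cast
        linarith
      have h1 : ‖s-1‖/((((n+N:ℕ):ℝ)+1) * ‖((n+N:ℕ):ℂ)+s‖) ≤
          ‖s-1‖/((((n:ℝ)+N)+1) * ((n:ℝ)+N)) := by
        have hnN : (0:ℝ) < (n:ℝ)+(N:ℝ) := by
          have := Nat.cast_nonneg (α := ℝ) n
          linarith
        apply div_le_div_of_nonneg_left (norm_nonneg _) (mul_pos (by linarith) hnN)
        push_cast at habs ⊢
        nlinarith [habs]
      refine h1.trans (le_of_eq ?_)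
      rw [show ((((n:ℝ)+N)+1) * ((n:ℝ)+N)) = (((n:ℝ)+N) * (((n:ℝ)+N)+1)) by ring,
        div_eq_mul_inv]
    have hsum2 := (hasSum_telescope (a := (N:ℝ)) hNpos).summable
    calc (∑' n : ℕ, ‖digTerm s (n+N)‖)
        ≤ ∑' n : ℕ, ‖s-1‖ * ((((n:ℝ)+N) * (((n:ℝ)+N)+1))⁻¹) :=
          Summable.tsum_le_tsum hterm ((summable_nat_add_iff N).mpr hsnorm) (hsum2.mul_left ‖s-1‖)
      _ = ‖s-1‖ * (N:ℝ)⁻¹ := by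
          rw [tsum_mul_left, (hasSum_telescope hNpos).tsum_eq]
      _ ≤ c+2 := by
          have h1 : ‖s-1‖ * (N:ℝ)⁻¹ ≤ (|u| + (c+1)) * (N:ℝ)⁻¹ :=
            mul_le_mul_of_nonneg_right hs1 (by positivity)
          have h2 : (N:ℝ)⁻¹ ≤ |u|⁻¹ := by
            apply inv_anti₀ hu0 huN
          have h3 : (|u| + (c+1)) * (N:ℝ)⁻¹ ≤ (|u| + (c+1)) * |u|⁻¹ :=
            mul_le_mul_of_nonneg_left h2 (by positivity)
          have h4 : (|u| + (c+1)) * |u|⁻¹ ≤ c+2 := by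
            rw [← div_eq_mul_inv, div_le_iff₀ hu0]
            nlinarith
          linarith
  -- assemble
  have hT : ‖∑' n : ℕ, digTerm s n‖ ≤ ∑' n : ℕ, ‖digTerm s n‖ := norm_tsum_le_tsum_norm hsnorm
  have : ‖dig s‖ ≤ |Real.eulerMascheroniConstant| + ∑' n : ℕ, ‖digTerm s n‖ := by
    rw [dig]
    refine (norm_add_le _ _).trans ?_
    rw [norm_neg, Complex.norm_real, Real.norm_eq_abs]
    linarith
  rw [← hsplit] at this
  unfold digC
  linarith

lemma digTerm_re (s : ℂ) (n : ℕ) :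
    (digTerm s n).re = ((n:ℝ)+1)⁻¹ - ((n:ℝ)+s.re)/(((n:ℝ)+s.re)^2 + s.im^2) := by
  rw [digTerm, Complex.sub_re]
  have e1 : (((n:ℂ)+1)⁻¹).re = ((n:ℝ)+1)⁻¹ := by
    have : ((n:ℂ)+1)⁻¹ = ((((n:ℝ)+1)⁻¹ : ℝ) : ℂ) := by push_cast; ring
    rw [this, Complex.ofReal_re]
  rw [e1, Complex.inv_re, Complex.normSq_apply]
  have h2 : ((n:ℂ)+s).re = (n:ℝ)+s.re := by simp
  have h3 : ((n:ℂ)+s).im = s.im := by simp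
  rw [h2, h3]
  ring_nf

lemma digTerm_re_lower {c : ℝ} (hc : 0 < c) (u A : ℝ) (hA : 1 ≤ A) :
    -(|c-1| * (A*(A+1))⁻¹) ≤ (A+1)⁻¹ - (A+c)/((A+c)^2 + u^2) := by
  have hD : (0:ℝ) < (A+c)^2 + u^2 := by positivity
  have hA1 : (0:ℝ) < A+1 := by linarith
  have hA0 : (0:ℝ) < A := by linarith
  have h1 : (A+1)⁻¹ - (A+c)/((A+c)^2 + u^2) = ((A+c)*(c-1) + u^2)/((A+1)*((A+c)^2+u^2)) := by
    field_simp
    ring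
  rw [h1, show -(|c-1| * (A*(A+1))⁻¹) = (-|c-1|)/(A*(A+1)) by
    rw [div_eq_mul_inv]; ring]
  rw [div_le_div_iff₀ (by positivity) (by positivity)]
  have habs1 : -(|c-1|) ≤ c-1 := neg_abs_le (c-1)
  have habs2 : c - 1 ≤ |c-1| := le_abs_self (c-1)
  have habs0 : 0 ≤ |c-1| := abs_nonneg _
  have hAc : (0:ℝ) < A + c := by linarith
  nlinarith [mul_le_mul_of_nonneg_left habs1 (mul_pos hA1 (mul_pos hA0 hAc)).le,
    mul_nonneg (mul_nonneg (mul_nonneg habs0 hA1.le) hAc.le) hc.le,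
    mul_nonneg (mul_nonneg habs0 hA1.le) (sq_nonneg u),
    mul_nonneg (mul_nonneg hA0.le hA1.le) (sq_nonneg u)]

noncomputable def digD (c : ℝ) : ℝ := |Real.eulerMascheroniConstant| + (4 + 2*c) + |c-1|

set_option maxHeartbeats 1000000 in
lemma dig_re_lower {c : ℝ} (hc : 0 < c) (u : ℝ) (hu : 1 ≤ u) :
    Real.log u - digD c ≤ (dig ((c:ℂ) + u * I)).re := by
  set s : ℂ := (c:ℂ) + u * I with hsdef
  have hre : s.re = c := by simp [hsdef]
  have him : s.im = u := by simp [hsdef]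
  have hs : 0 < s.re := by rw [hre]; exact hc
  have hu0 : (0:ℝ) < u := lt_of_lt_of_le one_pos hu
  set N : ℕ := ⌈u⌉₊ with hNdef
  have huN : u ≤ (N:ℝ) := Nat.le_ceil _
  have hN2u : (N:ℝ) ≤ 2*u := by
    have := Nat.ceil_lt_add_one hu0.le
    rw [← hNdef] at this
    linarith
  have hNpos : (0:ℝ) < N := lt_of_lt_of_le hu0 huN
  have hN1 : (1:ℝ) ≤ N := le_trans hu huN
  have hresum := Complex.re_tsum (summable_digTerm hs)
  have hsummre : Summable (fun n => (digTerm s n).re) :=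
    (Complex.hasSum_re (summable_digTerm hs).hasSum).summable
  have hsplit := Summable.sum_add_tsum_nat_add (f := fun n => (digTerm s n).re) N hsummre
  -- head lower bound
  have hhead : Real.log u - (4+2*c) ≤ ∑ n ∈ Finset.range N, (digTerm s n).re := by
    have h1 : ∀ n ∈ Finset.range N, ((n:ℝ)+1)⁻¹ - ((n:ℝ)+c)/u^2 ≤ (digTerm s n).re := by
      intro n _
      rw [digTerm_re, hre, him]
      have h2 : ((n:ℝ)+c)/(((n:ℝ)+c)^2+u^2) ≤ ((n:ℝ)+c)/u^2 := by
        apply div_le_div_of_nonneg_left (by positivity) (by positivity)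
        nlinarith [sq_nonneg ((n:ℝ)+c)]
      linarith
    have hB : ∑ n ∈ Finset.range N, (((n:ℝ)+c)/u^2) ≤ 4+2*c := by
      have hterm : ∀ n ∈ Finset.range N, ((n:ℝ)+c)/u^2 ≤ ((N:ℝ)+c)/u^2 := by
        intro n hn
        have hn' : (n:ℝ) ≤ N := by
          have := (Finset.mem_range.mp hn).le
          exact_mod_cast this
        gcongr
      calc ∑ n ∈ Finset.range N, (((n:ℝ)+c)/u^2)
          ≤ (Finset.range N).card • (((N:ℝ)+c)/u^2) := Finset.sum_le_card_nsmul _ _ _ hterm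
        _ = (N:ℝ) * (((N:ℝ)+c)/u^2) := by
            rw [Finset.card_range, nsmul_eq_mul]
        _ ≤ 4+2*c := by
            rw [mul_div_assoc', div_le_iff₀ (by positivity)]
            nlinarith [mul_le_mul hN2u (show (N:ℝ)+c ≤ 2*u+c by linarith)
              (by positivity) (by positivity),
              mul_le_mul_of_nonneg_left (show u ≤ u^2 by nlinarith)
                (show (0:ℝ) ≤ 2*c by linarith)]
    have hA := log_add_one_le_sum_inv N
    have hlog : Real.log u ≤ Real.log ((N:ℝ)+1) := Real.log_le_log hu0 (by linarith)
    have hsum_split : ∑ n ∈ Finset.range N, (((n:ℝ)+1)⁻¹ - ((n:ℝ)+c)/u^2)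
        = (∑ n ∈ Finset.range N, ((n:ℝ)+1)⁻¹) - ∑ n ∈ Finset.range N, (((n:ℝ)+c)/u^2) :=
      Finset.sum_sub_distrib _ _
    have := Finset.sum_le_sum h1
    rw [hsum_split] at this
    linarith
  -- tail lower bound
  have htail : -(|c-1|) ≤ ∑' n : ℕ, (digTerm s (n+N)).re := by
    have hterm : ∀ n : ℕ,
        (-|c-1|) * ((((n:ℝ)+N)*(((n:ℝ)+N)+1))⁻¹) ≤ (digTerm s (n+N)).re := by
      intro n
      rw [digTerm_re, hre, him]
      have hA1 : 1 ≤ (n:ℝ)+N := by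
        have := Nat.cast_nonneg (α := ℝ) n
        linarith
      have hlow := digTerm_re_lower hc u ((n:ℝ)+(N:ℝ)) hA1
      push_cast
      rw [neg_mul]
      convert hlow using 2 <;> push_cast <;> ring
    have hsum2 := (hasSum_telescope (a := (N:ℝ)) hNpos)
    have hsum2' : Summable (fun n : ℕ => (-|c-1|) * ((((n:ℝ)+N)*(((n:ℝ)+N)+1))⁻¹)) :=
      hsum2.summable.mul_left _
    have hts : ∑' n : ℕ, (-|c-1|) * ((((n:ℝ)+N)*(((n:ℝ)+N)+1))⁻¹) = (-|c-1|) * (N:ℝ)⁻¹ := by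
      rw [tsum_mul_left, hsum2.tsum_eq]
    have h5 : -(|c-1|) ≤ (-|c-1|) * (N:ℝ)⁻¹ := by
      have hinv1 : (N:ℝ)⁻¹ ≤ 1 := by
        rw [inv_le_one_iff₀]
        right
        linarith
      have hinv0 : (0:ℝ) ≤ (N:ℝ)⁻¹ := by positivity
      nlinarith [abs_nonneg (c-1)]
    calc -(|c-1|) ≤ (-|c-1|) * (N:ℝ)⁻¹ := h5
      _ = ∑' n : ℕ, (-|c-1|) * ((((n:ℝ)+N)*(((n:ℝ)+N)+1))⁻¹) := hts.symm
      _ ≤ ∑' n : ℕ, (digTerm s (n+N)).re :=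
          Summable.tsum_le_tsum hterm hsum2' ((summable_nat_add_iff N).mpr hsummre)
  -- assemble
  have hdigre : (dig s).re = -Real.eulerMascheroniConstant + ∑' n : ℕ, (digTerm s n).re := by
    rw [dig, Complex.add_re, Complex.neg_re, Complex.ofReal_re, hresum]
  rw [hdigre, ← hsplit]
  have habsγ := le_abs_self Real.eulerMascheroniConstant
  have habsγ2 := neg_abs_le Real.eulerMascheroniConstant
  unfold digD
  linarith

lemma abs_line_pos {c : ℝ} (hc : 0 < c) (t : ℝ) : 0 < ‖(c:ℂ) + t*I‖ := by
  apply lt_of_lt_of_le hc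
  have := Complex.re_le_norm ((c:ℂ) + t*I)
  simpa using this

lemma abs_line_ge (c t : ℝ) : |t| ≤ ‖(c:ℂ) + t*I‖ := by
  have := Complex.abs_im_le_norm ((c:ℂ) + t*I)
  simpa using this

lemma abs_line_le {c : ℝ} (hc : 0 ≤ c) (t : ℝ) : ‖(c:ℂ) + t*I‖ ≤ c + |t| := by
  refine (norm_add_le _ _).trans ?_
  rw [norm_mul, Complex.norm_I, mul_one, Complex.norm_real, Complex.norm_real,
    Real.norm_eq_abs, Real.norm_eq_abs, _root_.abs_of_nonneg hc]

lemma line_mem {c : ℝ} (hc : 0 < c) (t : ℝ) : ((c:ℂ) + t*I) ∈ {z : ℂ | 0 < z.re} := by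
  simp [hc]

lemma continuous_psi_line {c : ℝ} (hc : 0 < c) :
    Continuous (fun t : ℝ => deriv Complex.Gamma ((c:ℂ) + t*I) / Complex.Gamma ((c:ℂ) + t*I)) := by
  have hcont : Continuous fun t : ℝ => (c:ℂ) + (t:ℂ)*I := by continuity
  exact analyticOnNhd_psi.continuousOn.comp_continuous hcont (line_mem hc)

lemma integrableOn_Ici_of_bound {g : ℝ → ℂ} (hg : Continuous g) (K : ℝ)
    (hb : ∀ t : ℝ, 1 ≤ t → ‖g t‖ ≤ K * t^(-(3:ℝ)/2)) :
    IntegrableOn g (Ici (1:ℝ)) := by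
  have hmaj : IntegrableOn (fun t : ℝ => K * t^(-(3:ℝ)/2)) (Ioi (1:ℝ)) := by
    exact ((integrableOn_Ioi_rpow_iff one_pos).mpr (by norm_num)).const_mul K
  rw [integrableOn_Ici_iff_integrableOn_Ioi]
  apply Integrable.mono' hmaj hg.aestronglyMeasurable.restrict
  filter_upwards [ae_restrict_mem measurableSet_Ioi] with t ht
  exact hb t (le_of_lt ht)

lemma norm_div_cast_pow (z : ℂ) (x : ℝ) (hx : 0 ≤ x) (k : ℕ) :
    ‖z / ((x:ℂ))^k‖ = ‖z‖ / x^k := by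
  rw [norm_div, norm_pow, Complex.norm_real, Real.norm_eq_abs, _root_.abs_of_nonneg hx]

lemma sqrt_div_sq_bound {t : ℝ} (ht : 1 ≤ t) (L C : ℝ) (hL : L ≤ 2*Real.sqrt t)
    (hC : 0 ≤ C) (hLnn : 0 ≤ L) :
    (L + C)/t^2 ≤ (2 + C) * t^(-(3:ℝ)/2) := by
  have ht0 : (0:ℝ) < t := lt_of_lt_of_le one_pos ht
  have hsq : Real.sqrt t = t^((1:ℝ)/2) := Real.sqrt_eq_rpow t
  have hsq1 : 1 ≤ Real.sqrt t := by
    rw [show (1:ℝ) = Real.sqrt 1 by simp]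
    exact Real.sqrt_le_sqrt ht
  have key : t^(-(3:ℝ)/2) = Real.sqrt t / t^2 := by
    rw [hsq, ← Real.rpow_natCast t 2, ← Real.rpow_sub ht0]
    norm_num
  rw [key, ← mul_div_assoc]
  gcongr
  nlinarith [hsq1, hL, hC]

lemma log_le_two_sqrt {t : ℝ} (ht : 1 ≤ t) : Real.log t ≤ 2 * Real.sqrt t := by
  have ht0 : (0:ℝ) < t := lt_of_lt_of_le one_pos ht
  have h1 : Real.log t = 2 * Real.log (Real.sqrt t) := by
    rw [Real.log_sqrt ht0.le]; ring
  have h2 : Real.log (Real.sqrt t) ≤ Real.sqrt t - 1 :=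
    Real.log_le_sub_one_of_pos (Real.sqrt_pos.mpr ht0)
  nlinarith [Real.sqrt_nonneg t]

lemma integrable_part {c : ℝ} (hc : 0 < c) (C₀ : ℝ) (hC₀ : 0 < C₀)
    (hb : ∀ u : ℝ, 1 ≤ |u| →
      ‖deriv Complex.Gamma ((c:ℂ) + u * I) / Complex.Gamma ((c:ℂ) + u * I)‖ ≤ Real.log |u| + C₀) :
    Integrable (fun t : ℝ =>
      deriv Complex.Gamma ((c:ℂ) + t * I) / Complex.Gamma ((c:ℂ) + t * I) /
        ((‖(c:ℂ) + t * I‖ : ℂ)) ^ 2) := by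
  set ψ := fun t : ℝ => deriv Complex.Gamma ((c:ℂ) + t*I) / Complex.Gamma ((c:ℂ) + t*I) with hψ
  set g : ℝ → ℂ := fun t => ψ t / ((‖(c:ℂ) + t*I‖ : ℂ))^2 with hgdef
  have hψc : Continuous ψ := continuous_psi_line hc
  have hgc : Continuous g := by
    apply hψc.div
    · apply Continuous.pow
      apply Complex.continuous_ofReal.comp
      apply continuous_norm.comp
      continuity
    · intro t
      exact pow_ne_zero 2 (Complex.ofReal_ne_zero.mpr (abs_line_pos hc t).ne')
  have hnorm : ∀ t : ℝ, ‖g t‖ = ‖ψ t‖ / (‖(c:ℂ)+t*I‖)^2 := fun t =>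
    norm_div_cast_pow _ _ (norm_nonneg _) 2
  have hbd : ∀ t : ℝ, 1 ≤ |t| → ‖g t‖ ≤ (2 + C₀) * |t|^(-(3:ℝ)/2) := by
    intro t ht
    have ht0 : (0:ℝ) < |t| := lt_of_lt_of_le one_pos ht
    rw [hnorm]
    have h1 : ‖ψ t‖ ≤ Real.log |t| + C₀ := hb t ht
    have h2 : |t|^2 ≤ (‖(c:ℂ)+t*I‖)^2 :=
      pow_le_pow_left₀ (abs_nonneg t) (abs_line_ge c t) 2
    have h3 : ‖ψ t‖ / (‖(c:ℂ)+t*I‖)^2 ≤ (Real.log |t| + C₀)/|t|^2 :=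
      div_le_div₀ (by have := Real.log_nonneg ht; linarith) h1 (by positivity) h2
    refine h3.trans ?_
    exact sqrt_div_sq_bound ht _ _ (log_le_two_sqrt ht) hC₀.le (Real.log_nonneg ht)
  have hIci : IntegrableOn g (Ici (1:ℝ)) := by
    apply integrableOn_Ici_of_bound hgc (2+C₀)
    intro t ht
    have h4 := hbd t (by rwa [_root_.abs_of_nonneg (by linarith : (0:ℝ) ≤ t)])
    rwa [_root_.abs_of_nonneg (by linarith : (0:ℝ) ≤ t)] at h4
  have hIicNeg : IntegrableOn g (Iic (-1:ℝ)) := by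
    have h2' : IntegrableOn (fun t => g (-t)) (Ici (1:ℝ)) := by
      apply integrableOn_Ici_of_bound (hgc.comp continuous_neg) (2+C₀)
      intro t ht
      have h4 := hbd (-t) (by rwa [abs_neg, _root_.abs_of_nonneg (by linarith : (0:ℝ) ≤ t)])
      rwa [abs_neg, _root_.abs_of_nonneg (by linarith : (0:ℝ) ≤ t)] at h4
    have h3 := (Measure.measurePreserving_neg (volume : Measure ℝ)).integrableOn_comp_preimage
      (Homeomorph.neg ℝ).measurableEmbedding (f := g) (s := Iic (-1:ℝ))
    have hpre : (Neg.neg : ℝ → ℝ) ⁻¹' (Iic (-1:ℝ)) = Ici (1:ℝ) := by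
      ext x
      simp [neg_le]
    apply h3.mp
    show IntegrableOn (g ∘ Neg.neg) _ _
    rw [hpre]
    exact h2'
  rw [← integrableOn_univ]
  have hunion : IntegrableOn g (Iic (-1:ℝ) ∪ (Icc (-1:ℝ) 1 ∪ Ici (1:ℝ))) :=
    hIicNeg.union ((hgc.integrableOn_Icc).union hIci)
  apply hunion.mono_set
  intro x _
  simp only [mem_union, mem_Iic, mem_Icc, mem_Ici]
  by_cases h1 : x ≤ -1
  · exact Or.inl h1
  · by_cases h2 : x ≤ 1
    · exact Or.inr (Or.inl ⟨by linarith, h2⟩)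
    · exact Or.inr (Or.inr (by linarith))

lemma not_integrable_part {c : ℝ} (hc : 0 < c) :
    ¬ Integrable (fun t : ℝ =>
      deriv Complex.Gamma ((c:ℂ) + t * I) / Complex.Gamma ((c:ℂ) + t * I) /
        ((‖(c:ℂ) + t * I‖ : ℂ)) ^ 1) := by
  intro hInt
  set ψ := fun t : ℝ => deriv Complex.Gamma ((c:ℂ) + t*I) / Complex.Gamma ((c:ℂ) + t*I) with hψ
  set g : ℝ → ℂ := fun t => ψ t / ((‖(c:ℂ) + t*I‖ : ℂ))^1 with hgdef
  set T : ℝ := max 1 (Real.exp (digD c + 1)) with hT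
  have hT1 : (1:ℝ) ≤ T := le_max_left _ _
  have hlow : ∀ t : ℝ, t ∈ Ioi T → ((1+c)*t)⁻¹ ≤ ‖g t‖ := by
    intro t ht
    rw [mem_Ioi] at ht
    have ht1 : 1 ≤ t := le_trans hT1 ht.le
    have ht0 : (0:ℝ) < t := by linarith
    have hψd : ψ t = dig ((c:ℂ) + t*I) := psi_formula (by simp [hc])
    have hrelow : Real.log t - digD c ≤ (dig ((c:ℂ)+t*I)).re := dig_re_lower hc t ht1
    have hlogT : digD c + 1 ≤ Real.log t := by
      have h5 : Real.exp (digD c + 1) ≤ T := le_max_right _ _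
      have h6 : Real.exp (digD c+1) < t := lt_of_le_of_lt h5 ht
      have h7 := Real.log_lt_log (Real.exp_pos _) h6
      rw [Real.log_exp] at h7
      exact h7.le
    have h7 : 1 ≤ (dig ((c:ℂ)+t*I)).re := by linarith
    have h8 : 1 ≤ ‖ψ t‖ := by
      rw [hψd]
      exact le_trans h7 (le_trans (le_abs_self _) (Complex.abs_re_le_norm _))
    have hnormg : ‖g t‖ = ‖ψ t‖ / (‖(c:ℂ)+t*I‖)^1 :=
      norm_div_cast_pow _ _ (norm_nonneg _) 1
    rw [hnormg, pow_one]
    have habs0 : 0 < ‖(c:ℂ)+t*I‖ := abs_line_pos hc t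
    have h9 : ‖(c:ℂ)+t*I‖ ≤ (1+c)*t := by
      have h10 := abs_line_le hc.le t
      rw [_root_.abs_of_pos ht0] at h10
      nlinarith
    calc ((1+c)*t)⁻¹ ≤ (‖(c:ℂ)+t*I‖)⁻¹ := by
          apply inv_anti₀ habs0 h9
      _ ≤ ‖ψ t‖ / ‖(c:ℂ)+t*I‖ := by
          rw [inv_eq_one_div]
          gcongr
  have h2 : IntegrableOn (fun t => ‖g t‖) (Ioi T) := hInt.norm.integrableOn
  have h3 : IntegrableOn (fun t : ℝ => ((1+c)*t)⁻¹) (Ioi T) := by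
    apply Integrable.mono' h2
    · exact ((measurable_id.const_mul (1+c)).inv).aestronglyMeasurable.restrict
    · filter_upwards [ae_restrict_mem measurableSet_Ioi] with t ht
      have ht0 : (0:ℝ) < t := lt_of_lt_of_le (lt_of_lt_of_le one_pos hT1) (le_of_lt (mem_Ioi.mp ht)) |>.le.lt_of_ne' (by
        intro h; exact absurd h (by nlinarith [mem_Ioi.mp ht]))
      rw [Real.norm_eq_abs, _root_.abs_of_nonneg (by positivity)]
      exact hlow t ht
  have hne : (1+c) ≠ 0 := by positivity
  have h4 : IntegrableOn (fun t : ℝ => t⁻¹) (Ioi T) := by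
    have h5 := h3.const_mul (1+c)
    have h6 : (fun t : ℝ => (1+c) * ((1+c)*t)⁻¹) = fun t : ℝ => t⁻¹ := by
      funext t
      rw [mul_inv, ← mul_assoc, mul_inv_cancel₀ hne, one_mul]
    rwa [h6] at h5
  exact not_IntegrableOn_Ioi_inv h4


/-- For c > 0 the digamma function satisfies ‖Γ'/Γ(c+iu)‖ ≤ log|u| + C₀ for
|u| ≥ 1; consequently the vertical order of Γ is m₀(Γ) = 2:
t ↦ |c+it|^{−2}(Γ'/Γ)(c+it) is integrable while
t ↦ |c+it|^{−1}(Γ'/Γ)(c+it) is not. -/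
theorem stmt17 (c : ℝ) (hc : 0 < c) :
    ∃ C₀ > (0 : ℝ),
      (∀ u : ℝ, 1 ≤ |u| →
        ‖deriv Complex.Gamma ((c : ℂ) + u * I) / Complex.Gamma ((c : ℂ) + u * I)‖ ≤
          Real.log |u| + C₀) ∧
      Integrable (fun t : ℝ =>
        deriv Complex.Gamma ((c : ℂ) + t * I) / Complex.Gamma ((c : ℂ) + t * I) /
          ((‖(c : ℂ) + t * I‖ : ℝ) : ℂ) ^ 2) ∧
      ¬ Integrable (fun t : ℝ =>
        deriv Complex.Gamma ((c : ℂ) + t * I) / Complex.Gamma ((c : ℂ) + t * I) /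
          ((‖(c : ℂ) + t * I‖ : ℝ) : ℂ) ^ 1) := by
  have hbound : ∀ u : ℝ, 1 ≤ |u| →
      ‖deriv Complex.Gamma ((c : ℂ) + u * I) / Complex.Gamma ((c : ℂ) + u * I)‖ ≤
        Real.log |u| + digC c := by
    intro u hu
    have hs : (0:ℝ) < ((c:ℂ) + u*I).re := by simp [hc]
    rw [psi_formula hs]
    exact dig_norm_bound hc u hu
  exact ⟨digC c, digC_pos hc, hbound,
    integrable_part hc (digC c) (digC_pos hc) hbound, not_integrable_part hc⟩
end

section
/- For each integer n ≥ 1 set ρₙ = n² 2ⁿ i and nₙ = 2ⁿ. Then (i) ∑_{n≥1} nₙ |ρₙ|^{−1} < ∞, and for every s with Re s > 0 the series g(s) = ∑_{n≥1} 2ⁿ/(s − n² 2ⁿ i) converges absolutely; (ii) for every c > 0 and every ε with 0 < ε < 1, and for every C > 0, there exists an integer k ≥ 1 such that the point s = c + k² 2^k i satisfies |g(s)| > C |s|^{1−ε}. In particular, the estimate |g(s)| ≤ C₀|s|^{1−ε} fails on the half-plane Re s > 0 for every ε > 0. -/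
open Complex MeasureTheory

lemma aux_rho (n : ℕ) : (((n:ℂ)+1)^2) * 2^(n+1) * I = ((((n:ℝ)+1)^2 * 2^(n+1) : ℝ) : ℂ) * I := by
  push_cast; ring

lemma aux_absrho (n : ℕ) :
    ‖(((n:ℂ)+1)^2) * 2^(n+1) * I‖ = ((n:ℝ)+1)^2 * 2^(n+1) := by
  rw [aux_rho, norm_mul, Complex.norm_I, Complex.norm_real, Real.norm_eq_abs, mul_one,
    _root_.abs_of_nonneg (by positivity : (0:ℝ) ≤ ((n:ℝ)+1)^2 * 2^(n+1))]

lemma aux_imrho (n : ℕ) : ((((n:ℂ)+1)^2) * 2^(n+1) * I).im = ((n:ℝ)+1)^2 * 2^(n+1) := by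
  have h : ∀ r : ℝ, ((r:ℂ) * I).im = r := fun r => by simp
  rw [aux_rho, h]

lemma sumsq : Summable (fun n : ℕ => 1/((n:ℝ)+1)^2) := by
  have := (summable_nat_add_iff 1).2 hasSum_zeta_two.summable
  simpa using this

lemma aux_den (s : ℂ) (n : ℕ) :
    |s.im - ((n:ℝ)+1)^2 * 2^(n+1)| ≤ ‖s - (((n:ℂ)+1)^2) * 2^(n+1) * I‖ := by
  have h := Complex.abs_im_le_norm (s - (((n:ℂ)+1)^2) * 2^(n+1) * I)
  rwa [Complex.sub_im, aux_imrho] at h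

lemma part1 : Summable fun n : ℕ =>
    ((2 : ℝ) ^ (n + 1)) / ‖(((n : ℂ) + 1) ^ 2) * 2 ^ (n + 1) * I‖ := by
  have h : ∀ n : ℕ, ((2:ℝ)^(n+1)) / ‖(((n:ℂ)+1)^2) * 2^(n+1) * I‖
      = 1/((n:ℝ)+1)^2 := by
    intro n
    rw [aux_absrho]
    rw [eq_div_iff (by positivity)]
    field_simp
  exact sumsq.congr fun n => (h n).symm

lemma part2 (s : ℂ) :
    Summable fun n : ℕ =>
      ‖(2:ℂ)^(n+1) / (s - (((n:ℂ)+1)^2) * 2^(n+1) * I)‖ := by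
  obtain ⟨N, hN⟩ := pow_unbounded_of_one_lt (|s.im|) (one_lt_two (α := ℝ))
  rw [← summable_nat_add_iff N]
  refine Summable.of_nonneg_of_le (fun n => norm_nonneg _) (fun n => ?_)
    (sumsq.mul_left 2)
  set m := n + N with hm
  have hsim : |s.im| ≤ (2:ℝ)^m := le_trans hN.le (pow_le_pow_right₀ one_le_two (by omega))
  have hm1 : (1:ℝ) ≤ ((m:ℝ)+1)^2 := by nlinarith [Nat.cast_nonneg (α := ℝ) m]
  have hD : ((m:ℝ)+1)^2 * 2^m ≤ ‖s - (((m:ℂ)+1)^2) * 2^(m+1) * I‖ := by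
    refine le_trans ?_ (aux_den s m)
    have h1 : ((m:ℝ)+1)^2 * 2^(m+1) - s.im ≤ |s.im - ((m:ℝ)+1)^2 * 2^(m+1)| := by
      have := neg_le_abs (s.im - ((m:ℝ)+1)^2 * 2^(m+1)); linarith
    have h2 : s.im ≤ (2:ℝ)^m := le_trans (le_abs_self _) hsim
    have h3 : (2:ℝ)^m ≤ ((m:ℝ)+1)^2 * 2^m := le_mul_of_one_le_left (by positivity) hm1
    have h4 : ((m:ℝ)+1)^2 * 2^(m+1) = 2 * (((m:ℝ)+1)^2 * 2^m) := by ring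
    nlinarith
  have hDpos : (0:ℝ) < ‖s - (((m:ℂ)+1)^2) * 2^(m+1) * I‖ :=
    lt_of_lt_of_le (by positivity) hD
  have habs : ‖(2:ℂ)^(m+1) / (s - (((m:ℂ)+1)^2) * 2^(m+1) * I)‖
      = (2:ℝ)^(m+1) / ‖s - (((m:ℂ)+1)^2) * 2^(m+1) * I‖ := by
    rw [norm_div]
    norm_num
  rw [habs]
  calc (2:ℝ)^(m+1) / ‖s - (((m:ℂ)+1)^2) * 2^(m+1) * I‖
      ≤ (2:ℝ)^(m+1) / (((m:ℝ)+1)^2 * 2^m) := by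
        apply div_le_div_of_nonneg_left (by positivity) (by positivity) hD
    _ = 2 / ((m:ℝ)+1)^2 := by field_simp; ring
    _ ≤ 2 / ((n:ℝ)+1)^2 := by
        apply div_le_div_of_nonneg_left (by norm_num) (by positivity)
        have : (n:ℝ) ≤ m := by exact_mod_cast Nat.le_add_right n N
        nlinarith
    _ = 2 * (1/((n:ℝ)+1)^2) := by ring

lemma aux_grow {a b : ℕ} (h : a + 1 ≤ b) : (a:ℝ)^2*2^a ≤ (b:ℝ)^2*2^b/2 := by
  have h1 : (a:ℝ) ≤ b := by exact_mod_cast le_trans (Nat.le_succ a) h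
  have h2 : (2:ℝ)^(a+1) ≤ 2^b := pow_le_pow_right₀ one_le_two h
  have h3 : (0:ℝ) ≤ a := Nat.cast_nonneg a
  have h4 : (0:ℝ) ≤ (2:ℝ)^a := by positivity
  have h5 : (a:ℝ)^2 ≤ (b:ℝ)^2 := by nlinarith
  have h6 : (2:ℝ)^a ≤ 2^b/2 := by rw [pow_succ] at h2; linarith
  calc (a:ℝ)^2*2^a ≤ (b:ℝ)^2*2^a := mul_le_mul_of_nonneg_right h5 h4
    _ ≤ (b:ℝ)^2*(2^b/2) := mul_le_mul_of_nonneg_left h6 (sq_nonneg _)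
    _ = (b:ℝ)^2*2^b/2 := by ring

lemma aux_key_s19 {m k : ℕ} (hne : m ≠ k) :
    (m:ℝ)^2*2^m/2 ≤ |(k:ℝ)^2*2^k - (m:ℝ)^2*2^m| := by
  have hpk : (0:ℝ) ≤ (k:ℝ)^2*2^k := by positivity
  have hpm : (0:ℝ) ≤ (m:ℝ)^2*2^m := by positivity
  rcases lt_or_gt_of_ne hne with h | h
  · have := aux_grow (Nat.succ_le_of_lt h)
    rw [_root_.abs_of_nonneg (by linarith)]
    linarith
  · have := aux_grow (Nat.succ_le_of_lt h)
    rw [_root_.abs_of_nonpos (by linarith)]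
    linarith

lemma aux_X (k : ℕ) : (k:ℂ)^2*(2:ℂ)^k*I = ((((k:ℝ)^2*2^k):ℝ):ℂ)*I := by push_cast; ring

lemma aux_sre (c : ℝ) (k : ℕ) : ((c:ℂ) + (k:ℂ)^2*2^k*I).re = c := by
  rw [Complex.add_re, aux_X, Complex.ofReal_re]
  have h : ∀ r : ℝ, ((r:ℂ) * I).re = 0 := fun r => by simp
  rw [h]; ring

lemma aux_sim (c : ℝ) (k : ℕ) : ((c:ℂ) + (k:ℂ)^2*2^k*I).im = (k:ℝ)^2*2^k := by
  rw [Complex.add_im, aux_X, Complex.ofReal_im]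
  have h : ∀ r : ℝ, ((r:ℂ) * I).im = r := fun r => by simp
  rw [h]; ring

lemma basel' : HasSum (fun n : ℕ => 1/((n:ℝ)+1)^2) (Real.pi^2/6) := by
  have := (hasSum_nat_add_iff' (f := fun n : ℕ => (1:ℝ)/(n:ℝ)^2) 1).2 hasSum_zeta_two
  simpa using this

lemma tailbound (c : ℝ) (hc : 0 < c) (k : ℕ) (hk : 1 ≤ k) :
    (2:ℝ)^k/c - 4 ≤ ‖∑' n : ℕ, (2:ℂ)^(n+1) /
      (((c:ℂ) + (k:ℂ)^2*2^k*I) - (((n:ℂ)+1)^2)*2^(n+1)*I)‖ := by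
  set s : ℂ := (c:ℂ) + (k:ℂ)^2*2^k*I with hs
  set f : ℕ → ℂ := fun n => (2:ℂ)^(n+1) / (s - (((n:ℂ)+1)^2)*2^(n+1)*I) with hf
  have habs : Summable fun n => ‖f n‖ := part2 s
  have hsumf : Summable f := by
    apply Summable.of_norm
    simpa using habs
  set j := k - 1 with hj
  have hjk : j + 1 = k := Nat.succ_pred_eq_of_pos hk
  -- value of the special term
  have hsval : s - (((j:ℂ)+1)^2)*2^(j+1)*I = (c:ℂ) := by
    have hcast : ((j:ℂ)+1) = (k:ℂ) := by
      rw [← hjk]; push_cast; ring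
    rw [hs, hcast, hjk]
    ring
  have hfj : ‖f j‖ = (2:ℝ)^k / c := by
    rw [hf]
    simp only [hsval]
    rw [norm_div, Complex.norm_real, Real.norm_eq_abs, _root_.abs_of_pos hc, hjk]
    norm_num
  -- bound on remaining terms
  have hterm : ∀ n : ℕ, n ≠ j → ‖f n‖ ≤ 2/((n:ℝ)+1)^2 := by
    intro n hn
    have hne : n + 1 ≠ k := by omega
    have hkey := aux_key_s19 (m := n+1) (k := k) hne
    have hD : ((n:ℝ)+1)^2 * 2^(n+1) / 2 ≤ ‖s - (((n:ℂ)+1)^2)*2^(n+1)*I‖ := by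
      refine le_trans ?_ (aux_den s n)
      rw [aux_sim]
      calc ((n:ℝ)+1)^2 * 2^(n+1) / 2
          = ((n+1:ℕ):ℝ)^2*2^(n+1)/2 := by push_cast; ring
        _ ≤ |(k:ℝ)^2*2^k - ((n+1:ℕ):ℝ)^2*2^(n+1)| := hkey
        _ = |(k:ℝ)^2*2^k - ((n:ℝ)+1)^2*2^(n+1)| := by push_cast; ring_nf
    have hDpos : (0:ℝ) < ‖s - (((n:ℂ)+1)^2)*2^(n+1)*I‖ :=
      lt_of_lt_of_le (by positivity) hD
    have h1 : ‖f n‖ = (2:ℝ)^(n+1) / ‖s - (((n:ℂ)+1)^2)*2^(n+1)*I‖ := by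
      rw [hf, norm_div]; norm_num
    rw [h1]
    calc (2:ℝ)^(n+1) / ‖s - (((n:ℂ)+1)^2)*2^(n+1)*I‖
        ≤ (2:ℝ)^(n+1) / (((n:ℝ)+1)^2 * 2^(n+1) / 2) :=
          div_le_div_of_nonneg_left (by positivity) (by positivity) hD
      _ = 2/((n:ℝ)+1)^2 := by field_simp
  -- the tail sum
  set g : ℕ → ℝ := fun n => if n = j then 0 else ‖f n‖ with hg
  have hgsum : Summable g := by
    refine Summable.of_nonneg_of_le (fun n => ?_) (fun n => ?_) habs
    · rw [hg]; dsimp only; split <;> [rfl; exact norm_nonneg _]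
    · rw [hg]; dsimp only; split
      · exact norm_nonneg _
      · exact le_refl _
  have hgb : ∀ n, g n ≤ 2/((n:ℝ)+1)^2 := by
    intro n
    rw [hg]; dsimp only; split
    · positivity
    · exact hterm n (by assumption)
  have hbsum : HasSum (fun n : ℕ => 2/((n:ℝ)+1)^2) (Real.pi^2/3) := by
    have h := basel'.mul_left 2
    have e1 : (fun n : ℕ => 2 * (1/((n:ℝ)+1)^2)) = fun n : ℕ => 2/((n:ℝ)+1)^2 := by
      funext n; ring
    rw [e1] at h
    rw [show Real.pi^2/3 = 2*(Real.pi^2/6) by ring]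
    exact h
  have hgle : ∑' n, g n ≤ Real.pi^2/3 := by
    rw [← hbsum.tsum_eq]
    exact Summable.tsum_le_tsum hgb hgsum hbsum.summable
  have hpi : Real.pi^2/3 ≤ 4 := by
    nlinarith [Real.pi_lt_d2, Real.pi_pos]
  -- split tsum
  rw [hsumf.tsum_eq_add_tsum_ite j]
  have hR : ‖∑' n, if n = j then 0 else f n‖ ≤ 4 := by
    have hnorm : (fun n : ℕ => ‖if n = j then (0:ℂ) else f n‖) = g := by
      funext n; rw [hg]; dsimp only; split <;> simp
    have h1 : ‖∑' n, if n = j then (0:ℂ) else f n‖ ≤ ∑' n, g n := by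
      have h2 := norm_tsum_le_tsum_norm (f := fun n => if n = j then (0:ℂ) else f n)
        (by rw [hnorm]; exact hgsum)
      calc ‖∑' n, if n = j then (0:ℂ) else f n‖
          ≤ ∑' n, ‖if n = j then (0:ℂ) else f n‖ := h2
        _ = ∑' n, g n := by rw [hnorm]
    calc ‖∑' n, if n = j then (0:ℂ) else f n‖
        ≤ ∑' n, g n := h1
      _ ≤ Real.pi^2/3 := hgle
      _ ≤ 4 := hpi
  have htri : ‖f j‖ - ‖∑' n, if n = j then 0 else f n‖
      ≤ ‖f j + ∑' n, if n = j then 0 else f n‖ := by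
    have := norm_add_le (f j + ∑' n, if n = j then 0 else f n)
      (-(∑' n, if n = j then 0 else f n))
    simpa using this
  rw [hfj] at htri
  linarith

/-- Sharpness of the exponent d in the estimate |f_H'/f_H(s)| ≤ C₀|s|^d:
for the divisor with zeros ρₙ = n²2ⁿi of multiplicities nₙ = 2ⁿ (n ≥ 1),
(i) ∑ nₙ|ρₙ|⁻¹ < ∞ and g(s) = ∑ₙ 2ⁿ/(s − n²2ⁿi) converges absolutely on
Re s > 0, while (ii) no bound |g(s)| ≤ C|s|^{1−ε} with ε > 0 holds there. -/
theorem stmt19 :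
    (Summable fun n : ℕ =>
      ((2 : ℝ) ^ (n + 1)) /
        ‖((((n : ℂ) + 1) ^ 2) * 2 ^ (n + 1) * I)‖) ∧
    (∀ s : ℂ, 0 < s.re →
      Summable fun n : ℕ =>
        ‖((2 : ℂ) ^ (n + 1) /
          (s - (((n : ℂ) + 1) ^ 2) * 2 ^ (n + 1) * I))‖) ∧
    (∀ c : ℝ, 0 < c → ∀ ε : ℝ, 0 < ε → ε < 1 → ∀ C : ℝ, 0 < C →
      ∃ k : ℕ, 1 ≤ k ∧
        C * ‖((c : ℂ) + (k : ℂ) ^ 2 * 2 ^ k * I)‖ ^ ((1 : ℝ) - ε) <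
          ‖(∑' n : ℕ, (2 : ℂ) ^ (n + 1) /
            (((c : ℂ) + (k : ℂ) ^ 2 * 2 ^ k * I) -
              (((n : ℂ) + 1) ^ 2) * 2 ^ (n + 1) * I))‖) := by
  refine ⟨part1, fun s _ => part2 s, ?_⟩
  intro c hc ε hε hε1 C hC
  have h2e : (1:ℝ) < (2:ℝ)^(ε:ℝ) :=
    Real.one_lt_rpow_iff_of_pos two_pos |>.2 (Or.inl ⟨one_lt_two, hε⟩)
  have hT : Filter.Tendsto (fun k : ℕ => (k:ℝ)^2 / ((2:ℝ)^(ε:ℝ))^k)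
      Filter.atTop (nhds 0) := tendsto_pow_const_div_const_pow_of_one_lt 2 h2e
  have hδ : (0:ℝ) < (2*c*C*(c+1))⁻¹ := by positivity
  have E1 : ∀ᶠ k : ℕ in Filter.atTop, 1 ≤ k := Filter.eventually_ge_atTop 1
  have E2 : ∀ᶠ k : ℕ in Filter.atTop,
      (k:ℝ)^2 / ((2:ℝ)^(ε:ℝ))^k < (2*c*C*(c+1))⁻¹ :=
    hT.eventually (gt_mem_nhds hδ)
  have E3 : ∀ᶠ k : ℕ in Filter.atTop, 8*c < (2:ℝ)^k :=
    (tendsto_pow_atTop_atTop_of_one_lt (one_lt_two (α := ℝ))).eventually_gt_atTop (8*c)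
  obtain ⟨k, hk1, hk2, hk3⟩ := (E1.and (E2.and E3)).exists
  refine ⟨k, hk1, ?_⟩
  have hk1' : (1:ℝ) ≤ (k:ℝ) := by exact_mod_cast hk1
  set P := (k:ℝ)^2 * 2^k with hP
  have hksq : (1:ℝ) ≤ (k:ℝ)^2 := by nlinarith
  have h2k1 : (1:ℝ) ≤ (2:ℝ)^k := one_le_pow₀ one_le_two
  have hP1 : (1:ℝ) ≤ P := by rw [hP]; nlinarith
  have hP0 : (0:ℝ) < P := lt_of_lt_of_le one_pos hP1
  have h1e : (0:ℝ) ≤ 1 - ε := by linarith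
  have hA : ‖(c:ℂ) + (k:ℂ)^2*2^k*I‖ ≤ (c+1)*P := by
    have h := Complex.norm_le_abs_re_add_abs_im ((c:ℂ) + (k:ℂ)^2*2^k*I)
    rw [aux_sre, aux_sim, _root_.abs_of_pos hc,
      _root_.abs_of_nonneg (by positivity)] at h
    have h2 : c ≤ c * P := le_mul_of_one_le_right hc.le hP1
    rw [hP] at h2 ⊢
    nlinarith
  have hpow : ((2:ℝ)^k : ℝ)^(ε:ℝ) = ((2:ℝ)^(ε:ℝ))^k := by
    rw [← Real.rpow_natCast (2:ℝ) k, ← Real.rpow_natCast ((2:ℝ)^(ε:ℝ)) k,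
      ← Real.rpow_mul (by norm_num), ← Real.rpow_mul (by norm_num)]
    congr 1
    ring
  have h2kP : (2:ℝ)^k ≤ P := by rw [hP]; nlinarith
  have hchain : ‖(c:ℂ) + (k:ℂ)^2*2^k*I‖ ^ ((1:ℝ)-ε)
      ≤ (c+1) * ((2:ℝ)^k * ((k:ℝ)^2 / ((2:ℝ)^(ε:ℝ))^k)) := by
    calc ‖(c:ℂ) + (k:ℂ)^2*2^k*I‖ ^ ((1:ℝ)-ε)
        ≤ ((c+1)*P) ^ ((1:ℝ)-ε) := Real.rpow_le_rpow (norm_nonneg _) hA h1e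
      _ = (c+1)^((1:ℝ)-ε) * P^((1:ℝ)-ε) := Real.mul_rpow (by positivity) hP0.le
      _ ≤ (c+1) * P^((1:ℝ)-ε) := by
          have h2 : (c+1)^((1:ℝ)-ε) ≤ (c+1)^(1:ℝ) :=
            Real.rpow_le_rpow_of_exponent_le (by linarith) (by linarith)
          rw [Real.rpow_one] at h2
          exact mul_le_mul_of_nonneg_right h2 (Real.rpow_nonneg hP0.le _)
      _ = (c+1) * (P / P^(ε:ℝ)) := by
          rw [Real.rpow_sub hP0, Real.rpow_one]
      _ ≤ (c+1) * (P / ((2:ℝ)^k : ℝ)^(ε:ℝ)) := by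
          refine mul_le_mul_of_nonneg_left ?_ (by linarith)
          exact div_le_div_of_nonneg_left hP0.le
            (Real.rpow_pos_of_pos (by positivity) _)
            (Real.rpow_le_rpow (by positivity) h2kP hε.le)
      _ = (c+1) * ((2:ℝ)^k * ((k:ℝ)^2 / ((2:ℝ)^(ε:ℝ))^k)) := by
          rw [hpow, hP]
          ring
  have hCpos : (0:ℝ) < C * (c+1) * 2^k := by positivity
  have hlt : C * ‖(c:ℂ) + (k:ℂ)^2*2^k*I‖ ^ ((1:ℝ)-ε)
      < (2:ℝ)^k / (2*c) := by
    calc C * ‖(c:ℂ) + (k:ℂ)^2*2^k*I‖ ^ ((1:ℝ)-ε)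
        ≤ C * ((c+1) * ((2:ℝ)^k * ((k:ℝ)^2 / ((2:ℝ)^(ε:ℝ))^k))) :=
          mul_le_mul_of_nonneg_left hchain hC.le
      _ = (C * (c+1) * 2^k) * ((k:ℝ)^2 / ((2:ℝ)^(ε:ℝ))^k) := by ring
      _ < (C * (c+1) * 2^k) * (2*c*C*(c+1))⁻¹ :=
          mul_lt_mul_of_pos_left hk2 hCpos
      _ = (2:ℝ)^k / (2*c) := by field_simp
  have hfin : (2:ℝ)^k / (2*c) < (2:ℝ)^k / c - 4 := by
    have h1 : (2:ℝ)^k / c - (2:ℝ)^k / (2*c) = (2:ℝ)^k / (2*c) := by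
      field_simp; ring
    have h2 : (4:ℝ) < (2:ℝ)^k / (2*c) := by
      rw [lt_div_iff₀ (by positivity)]
      linarith
    linarith
  exact lt_of_lt_of_le (lt_trans hlt hfin) (tailbound c hc k hk1)
end
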